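/- arXiv:2510.09270 — 2 statements merged into one kernel-verified Lean document; each statement's English description precedes it below -/
import Mathlib

section
/- Suppose G contains no colliders and μ ∈ P_G satisfies the TV-Lipschitz kernel assumption with constant L. Then the kernels of the midpoint projection μ^M are (2L+1)-Lipschitz with respect to the Wasserstein distance: for every 2 ≤ k ≤ K and all x_pa(k), x̃_pa(k) ∈ M_pa(k), W( μ^M(dx_k | x_pa(k)), μ^M(dx_k | x̃_pa(k)) ) ≤ (2L+1) ‖x_pa(k) − x̃_pa(k)‖. -/
open MeasureTheory Finset
open scoped ENNReal NNReal

noncomputable section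

abbrev I01 : Type := unitInterval

def half : I01 := ⟨1 / 2, by norm_num⟩

/-- Index of the dyadic cell of side length `2^{-η}` containing `t ∈ [0,1]`. -/
def cIdx (η : ℕ) (t : I01) : ℕ := min ⌊(t : ℝ) * 2 ^ η⌋₊ (2 ^ η - 1)

lemma cIdx_le_real (η : ℕ) (t : I01) : (cIdx η t : ℝ) ≤ 2 ^ η - 1 := by
  have h : cIdx η t ≤ 2 ^ η - 1 := min_le_right _ _
  have h1 : (1 : ℕ) ≤ 2 ^ η := Nat.one_le_two_pow
  calc (cIdx η t : ℝ) ≤ ((2 ^ η - 1 : ℕ) : ℝ) := by exact_mod_cast h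
    _ = 2 ^ η - 1 := by rw [Nat.cast_sub h1]; push_cast; ring

/-- Midpoint of the dyadic cell of side length `2^{-η}` containing `t`. -/
def cMid (η : ℕ) (t : I01) : I01 :=
  ⟨((cIdx η t : ℝ) + 1 / 2) / 2 ^ η, by
    constructor
    · positivity
    · rw [div_le_one (by positivity)]
      have := cIdx_le_real η t
      linarith⟩

/-- Order-1 Wasserstein distance (w.r.t. the given metric, infimum over couplings). -/
def Wass {α : Type*} [MeasurableSpace α] [PseudoMetricSpace α] (μ ν : Measure α) : ℝ :=
  sInf {r | ∃ π : Measure (α × α), π.map Prod.fst = μ ∧ π.map Prod.snd = ν ∧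
    r = ∫ p, dist p.1 p.2 ∂π}

/-- Total variation distance, `sup { ∫ f dμ - ∫ f dν : f measurable, |f| ≤ 1/2 }`. -/
def TVDist {α : Type*} [MeasurableSpace α] (μ ν : Measure α) : ℝ :=
  sSup {r | ∃ f : α → ℝ, Measurable f ∧ (∀ x, |f x| ≤ 1 / 2) ∧
    r = (∫ x, f x ∂μ) - ∫ x, f x ∂ν}

/-- Total variation norm of a signed measure, `sup { ∫ f dν : |f| ≤ 1/2 } = |ν|(univ)/2`. -/
def tvNorm {α : Type*} [MeasurableSpace α] (s : SignedMeasure α) : ℝ :=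
  (s.totalVariation Set.univ).toReal / 2

/-- `m` conditioned on `s` (normalized restriction), Dirac at `x₀` if `m s = 0`. -/
def condOn {α : Type*} [MeasurableSpace α] (m : Measure α) (s : Set α) (x₀ : α) : Measure α :=
  if m s = 0 then Measure.dirac x₀ else (m s)⁻¹ • m.restrict s

/-- Empirical measure of the sample `ω`. -/
def empOf {α : Type*} [MeasurableSpace α] (n : ℕ) (ω : Fin n → α) : Measure α :=
  (n : ℝ≥0∞)⁻¹ • ∑ i : Fin n, Measure.dirac (ω i)

/-- Law of `n` i.i.d. samples from `μ`. -/
def iid {α : Type*} [MeasurableSpace α] (n : ℕ) (μ : Measure α) : Measure (Fin n → α) :=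
  Measure.pi fun _ => μ

section Graphical

variable {K : ℕ}

abbrev Coord (d : Fin K → ℕ) (k : Fin K) : Type := Fin (d k) → I01
abbrev Pt (d : Fin K → ℕ) : Type := ∀ k : Fin K, Coord d k
abbrev PtOn (d : Fin K → ℕ) (I : Finset (Fin K)) : Type := ∀ j : I, Coord d j.1

def projOn (d : Fin K → ℕ) (I : Finset (Fin K)) (x : Pt d) : PtOn d I := fun j => x j.1

def restrOn (d : Fin K → ℕ) {I J : Finset (Fin K)} (h : I ⊆ J) (y : PtOn d J) : PtOn d I :=
  fun j => y ⟨j.1, h j.2⟩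

def basePt (d : Fin K → ℕ) : Pt d := fun _ _ => half

/-- The cell of the partition of `X_I` into cubes of side length `2^{-η}` containing `x`. -/
def cellOn (d : Fin K → ℕ) (η : ℕ) (I : Finset (Fin K)) (x : PtOn d I) : Set (PtOn d I) :=
  {y | ∀ j i, cIdx η (y j i) = cIdx η (x j i)}

/-- The cylinder over the cell of `A_I` containing the coordinates `x_I` of `x`. -/
def cylOf (d : Fin K → ℕ) (η : ℕ) (I : Finset (Fin K)) (x : Pt d) : Set (Pt d) :=
  {y | ∀ j ∈ I, ∀ i, cIdx η (y j i) = cIdx η (x j i)}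

def midPtOn (d : Fin K → ℕ) (η : ℕ) (I : Finset (Fin K)) (x : PtOn d I) : PtOn d I :=
  fun j i => cMid η (x j i)

def midPt (d : Fin K → ℕ) (η : ℕ) (x : Pt d) : Pt d := fun k i => cMid η (x k i)

/-- The DAG (given by its parent map) is topologically sorted. -/
def SortedGraph (pa : Fin K → Finset (Fin K)) : Prop := ∀ k, ∀ j ∈ pa k, j < k

/-- A set of nodes is fully connected (any two of its nodes are joined by an edge). -/
def FullConn (pa : Fin K → Finset (Fin K)) (I : Finset (Fin K)) : Prop :=
  ∀ i ∈ I, ∀ j ∈ I, i < j → i ∈ pa j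

/-- The graph has no colliders: every parent set is fully connected. -/
def NoColliders (pa : Fin K → Finset (Fin K)) : Prop := ∀ k, FullConn pa (pa k)

def below (k : Fin K) : Finset (Fin K) := Finset.univ.filter fun j => j < k
def uptoI (k : Fin K) : Finset (Fin K) := Finset.univ.filter fun j => j ≤ k
def preOf (pa : Fin K → Finset (Fin K)) (k : Fin K) : Finset (Fin K) := uptoI k \ pa k

def dpa (d : Fin K → ℕ) (pa : Fin K → Finset (Fin K)) (k : Fin K) : ℕ := ∑ j ∈ pa k, d j

def dloc (d : Fin K → ℕ) (pa : Fin K → Finset (Fin K)) : ℕ :=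
  Finset.univ.sup fun k : Fin K => max 2 (d k) + dpa d pa k

def dmax (d : Fin K → ℕ) : ℕ := Finset.univ.sup fun k : Fin K => max 2 (d k)

/-- `κ` is a regular conditional distribution of the coordinates in `J` given those in `I`,
under `μ`. -/
def IsCondD (d : Fin K → ℕ) (μ : Measure (Pt d)) (I J : Finset (Fin K))
    (κ : PtOn d I → Measure (PtOn d J)) : Prop :=
  Measurable κ ∧ (∀ y, IsProbabilityMeasure (κ y)) ∧
    ∀ (A : Set (PtOn d I)) (B : Set (PtOn d J)), MeasurableSet A → MeasurableSet B →
      μ {x | projOn d I x ∈ A ∧ projOn d J x ∈ B} = ∫⁻ y in A, κ y B ∂(μ.map (projOn d I))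

/-- `μ ∈ P_G`: for each node, some conditional distribution of `x_k` given all earlier
coordinates factors through the parent coordinates only. -/
def MemPG (d : Fin K → ℕ) (pa : Fin K → Finset (Fin K)) (μ : Measure (Pt d)) : Prop :=
  ∀ k : Fin K, ∃ κ : PtOn d (pa k) → Measure (PtOn d ({k} : Finset (Fin K))),
    IsCondD d μ (below k ∪ pa k) {k}
      fun y => κ (restrOn d (fun _ hj => Finset.mem_union_right _ hj) y)

/-- Wasserstein-Lipschitz kernel assumption with constant `L`. -/
def WLip (d : Fin K → ℕ) (pa : Fin K → Finset (Fin K)) (L : ℝ) (μ : Measure (Pt d)) : Prop :=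
  ∀ k : Fin K, 1 ≤ k.1 →
    ∃ κ : PtOn d (pa k) → Measure (PtOn d ({k} : Finset (Fin K))),
      IsCondD d μ (pa k) {k} κ ∧
        ∀ x x' : PtOn d (pa k), Wass (κ x) (κ x') ≤ L * dist x x'

/-- Total-variation-Lipschitz kernel assumption with constant `L`. -/
def TVLip (d : Fin K → ℕ) (pa : Fin K → Finset (Fin K)) (L : ℝ) (μ : Measure (Pt d)) : Prop :=
  ∀ k : Fin K, 1 ≤ k.1 →
    (∃ κ : PtOn d (pa k) → Measure (PtOn d ({k} : Finset (Fin K))),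
      IsCondD d μ (pa k) {k} κ ∧
        ∀ x x', TVDist (κ x) (κ x') ≤ L * dist x x') ∧
    (∃ κ : PtOn d (pa k) → Measure (PtOn d (preOf pa k)),
      IsCondD d μ (pa k) (preOf pa k) κ ∧
        ∀ x x', TVDist (κ x) (κ x') ≤ L * dist x x') ∧
    (∃ κ : PtOn d ({k} : Finset (Fin K)) → Measure (PtOn d (pa k)),
      IsCondD d μ {k} (pa k) κ ∧
        ∀ x x', TVDist (κ x) (κ x') ≤ L * dist x x')

/-- Iterated construction of the graph product measure `∏_k κ_k(dx_k | x_pa(k))`. -/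
def chainM (d : Fin K → ℕ) (pa : Fin K → Finset (Fin K))
    (κ : ∀ k : Fin K, PtOn d (pa k) → Measure (PtOn d ({k} : Finset (Fin K)))) :
    ℕ → Measure (Pt d)
  | 0 => Measure.dirac (basePt d)
  | n + 1 =>
      if h : n < K then
        (chainM d pa κ n).bind fun x =>
          (κ ⟨n, h⟩ (projOn d (pa ⟨n, h⟩) x)).map fun y =>
            Function.update x ⟨n, h⟩ (y ⟨⟨n, h⟩, Finset.mem_singleton_self _⟩)
      else chainM d pa κ n

def graphProd (d : Fin K → ℕ) (pa : Fin K → Finset (Fin K))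
    (κ : ∀ k : Fin K, PtOn d (pa k) → Measure (PtOn d ({k} : Finset (Fin K)))) :
    Measure (Pt d) := chainM d pa κ K

/-- Completion of `x ∈ X_pa(k)` to a point of `X` (cell midpoints on `pa k`, `1/2` elsewhere). -/
def extendPt (d : Fin K → ℕ) (pa : Fin K → Finset (Fin K)) (η : ℕ) (k : Fin K)
    (x : PtOn d (pa k)) : Pt d :=
  fun j => if h : j ∈ pa k then (fun i => cMid η (x ⟨j, h⟩ i)) else fun _ => half

/-- The measure `ν^A` built from a choice `κ` of conditional kernels of `ν`. -/
def opA (d : Fin K → ℕ) (pa : Fin K → Finset (Fin K)) (η : ℕ) (ν : Measure (Pt d))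
    (κ : ∀ k : Fin K, PtOn d (pa k) → Measure (PtOn d ({k} : Finset (Fin K)))) :
    Measure (Pt d) :=
  graphProd d pa fun k x =>
    (condOn (ν.map (projOn d (pa k))) (cellOn d η (pa k) x) (midPtOn d η (pa k) x)).bind (κ k)

/-- The canonical (kernel-choice free) version of `ν^A`. -/
def opACanon (d : Fin K → ℕ) (pa : Fin K → Finset (Fin K)) (η : ℕ) (ν : Measure (Pt d)) :
    Measure (Pt d) :=
  graphProd d pa fun k x =>
    (condOn ν (projOn d (pa k) ⁻¹' cellOn d η (pa k) x) (extendPt d pa η k x)).map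
      (projOn d ({k} : Finset (Fin K)))

/-- The kernel `μ^{bA}(dx_k | x_pa(k)) = Σ_{c_k} μ(c_k | c_pa(k)(x_pa(k))) μ_{k|c_k}(dx_k)`. -/
def kerBA (d : Fin K → ℕ) (pa : Fin K → Finset (Fin K)) (η : ℕ) (μ : Measure (Pt d))
    (k : Fin K) (x : PtOn d (pa k)) : Measure (PtOn d ({k} : Finset (Fin K))) :=
  (((condOn μ (projOn d (pa k) ⁻¹' cellOn d η (pa k) x) (extendPt d pa η k x)).map
      (projOn d ({k} : Finset (Fin K)))).bind) fun z =>
    condOn (μ.map (projOn d ({k} : Finset (Fin K)))) (cellOn d η {k} z) (midPtOn d η {k} z)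

/-- The measure `μ^{bA}`. -/
def opBA (d : Fin K → ℕ) (pa : Fin K → Finset (Fin K)) (η : ℕ) (μ : Measure (Pt d)) :
    Measure (Pt d) := graphProd d pa (kerBA d pa η μ)

/-- The midpoint projection `μ^M` of `μ^{bA}`. -/
def opM (d : Fin K → ℕ) (pa : Fin K → Finset (Fin K)) (η : ℕ) (μ : Measure (Pt d)) :
    Measure (Pt d) := (opBA d pa η μ).map (midPt d η)

/-- The kernel of `μ^M` built from the conditional kernel `κ` of `μ`:
cell-average of `κ`, pushed to cell midpoints. -/
def kerM (d : Fin K → ℕ) (pa : Fin K → Finset (Fin K)) (η : ℕ) (μ : Measure (Pt d)) (k : Fin K)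
    (κ : PtOn d (pa k) → Measure (PtOn d ({k} : Finset (Fin K)))) (y : PtOn d (pa k)) :
    Measure (PtOn d ({k} : Finset (Fin K))) :=
  ((condOn (μ.map (projOn d (pa k))) (cellOn d η (pa k) y) (midPtOn d η (pa k) y)).bind κ).map
    (midPtOn d η ({k} : Finset (Fin K)))

/-- `m(dx_k | c_pa(k)(x))`: `m` conditioned on the parent cell of `x`, projected to node `k`. -/
def cellCondProj (d : Fin K → ℕ) (pa : Fin K → Finset (Fin K)) (η : ℕ) (m : Measure (Pt d))
    (k : Fin K) (x : Pt d) : Measure (PtOn d ({k} : Finset (Fin K))) :=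
  (condOn m (projOn d (pa k) ⁻¹' cellOn d η (pa k) (projOn d (pa k) x)) (midPt d η x)).map
    (projOn d ({k} : Finset (Fin K)))

/-- Minimax risk `V_Q(n)` for estimating a measure in `Q` from `n` i.i.d. samples,
in Wasserstein distance. -/
def minimax (d : Fin K → ℕ) (Q : Set (Measure (Pt d))) (n : ℕ) : ℝ :=
  ⨅ E : {E : (Fin n → Pt d) → Measure (Pt d) // Measurable E},
    ⨆ μ : Q, ∫ ω, Wass (μ : Measure (Pt d)) (E.1 ω) ∂(iid n (μ : Measure (Pt d)))

/-- Number of directed paths of length `ℓ` starting at `k` (following edge directions). -/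
def pathCount (pa : Fin K → Finset (Fin K)) : ℕ → Fin K → ℕ
  | 0, _ => 1
  | ℓ + 1, k => ∑ j ∈ Finset.univ.filter (fun j => k ∈ pa j), pathCount pa ℓ j

/-- The constant `M_{L,k} = 1 + Σ_{ℓ=1}^K a_{k,ℓ} L^ℓ`. -/
def MConst (pa : Fin K → Finset (Fin K)) (L : ℝ) (k : Fin K) : ℝ :=
  1 + ∑ ℓ ∈ Finset.Icc 1 K, (pathCount pa ℓ k : ℝ) * L ^ ℓ

/-- Lebesgue measure on `[0,1]^d = Π_k Π_i [0,1]`. -/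
def lebPt (d : Fin K → ℕ) : Measure (Pt d) :=
  Measure.pi fun k => Measure.pi fun _ : Fin (d k) => (volume : Measure ℝ).comap Subtype.val

/-- Product of the (one-node) marginals of `ν`. -/
def prodMarg (d : Fin K → ℕ) (ν : Measure (Pt d)) : Measure (Pt d) :=
  Measure.pi fun k => ν.map fun x => x k

/-- Cell average `f^ν` of `f` w.r.t. the product of the marginals of `ν`. -/
def fAvg (d : Fin K → ℕ) (η : ℕ) (ν : Measure (Pt d)) (f : Pt d → ℝ) (x : Pt d) : ℝ :=
  if prodMarg d ν (cylOf d η Finset.univ x) = 0 then 0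
  else (∫ y in cylOf d η Finset.univ x, f y ∂prodMarg d ν) /
    (prodMarg d ν (cylOf d η Finset.univ x)).toReal

/-- Combining points over two disjoint blocks of nodes. -/
def glue (d : Fin K → ℕ) {J J' : Finset (Fin K)} (p : PtOn d J × PtOn d J') :
    PtOn d (J ∪ J') := fun j =>
  if h : j.1 ∈ J then p.1 ⟨j.1, h⟩
  else p.2 ⟨j.1, by
    rcases Finset.mem_union.mp j.2 with h' | h'
    · exact absurd h' h
    · exact h'⟩

/-- `X_J` and `X_J'` are conditionally independent given `X_I` under `μ`. -/
def CondIndepOn (d : Fin K → ℕ) (μ : Measure (Pt d)) (I J J' : Finset (Fin K)) : Prop :=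
  ∃ (κJ : PtOn d I → Measure (PtOn d J)) (κJ' : PtOn d I → Measure (PtOn d J')),
    IsCondD d μ I J κJ ∧ IsCondD d μ I J' κJ' ∧
      IsCondD d μ I (J ∪ J') fun y => ((κJ y).prod (κJ' y)).map (glue d)

/-- The set `P_CI` of probability measures all of whose disjoint coordinate blocks are
conditionally independent given any disjoint nonempty block. -/
def PCI (d : Fin K → ℕ) : Set (Measure (Pt d)) :=
  {μ | IsProbabilityMeasure μ ∧
    ∀ I J J' : Finset (Fin K), I.Nonempty → Disjoint I J → Disjoint I J' → Disjoint J J' →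
      CondIndepOn d μ I J J'}

end Graphical

section TwoBlocks

abbrev Vec (m : ℕ) : Type := Fin m → I01

def cellV (η : ℕ) {m : ℕ} (x : Vec m) : Set (Vec m) :=
  {y | ∀ i, cIdx η (y i) = cIdx η (x i)}

def midV (η : ℕ) {m : ℕ} (x : Vec m) : Vec m := fun i => cMid η (x i)

/-- `ν^A` for two blocks and the graph `1 → 2`. -/
def opA2 {m₁ m₂ : ℕ} (η : ℕ) (ν : Measure (Vec m₁ × Vec m₂)) : Measure (Vec m₁ × Vec m₂) :=
  ν.bind fun p =>
    ((condOn ν (Prod.fst ⁻¹' cellV η p.1) (midV η p.1, midV η p.2)).map Prod.snd).map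
      fun y => (p.1, y)

/-- `μ^{bA}` for two blocks:  `Σ_{c₁,c₂} μ(c₁ × c₂) (μ_{1|c₁} ⊗ μ_{2|c₂})`. -/
def opBA2 {m₁ m₂ : ℕ} (η : ℕ) (μ : Measure (Vec m₁ × Vec m₂)) : Measure (Vec m₁ × Vec m₂) :=
  μ.bind fun p =>
    (condOn (μ.map Prod.fst) (cellV η p.1) (midV η p.1)).prod
      (condOn (μ.map Prod.snd) (cellV η p.2) (midV η p.2))

/-- The kernel `μ^{bA}(dx₂ | x₁) = Σ_{c₂} μ(c₂ | c₁(x₁)) μ_{2|c₂}(dx₂)`. -/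
def kerBA2 {m₁ m₂ : ℕ} (η : ℕ) (μ : Measure (Vec m₁ × Vec m₂)) (x₁ : Vec m₁) :
    Measure (Vec m₂) :=
  (((condOn μ (Prod.fst ⁻¹' cellV η x₁) (midV η x₁, fun _ => half)).map Prod.snd).bind) fun z =>
    condOn (μ.map Prod.snd) (cellV η z) (midV η z)

/-- `κ` is a conditional distribution of the second block given the first, under `μ`. -/
def IsCD2 {m₁ m₂ : ℕ} (μ : Measure (Vec m₁ × Vec m₂)) (κ : Vec m₁ → Measure (Vec m₂)) : Prop :=
  Measurable κ ∧ (∀ x, IsProbabilityMeasure (κ x)) ∧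
    ∀ (A : Set (Vec m₁)) (B : Set (Vec m₂)), MeasurableSet A → MeasurableSet B →
      μ (A ×ˢ B) = ∫⁻ x in A, κ x B ∂(μ.map Prod.fst)

end TwoBlocks

end
section AuxLemmas

open MeasureTheory

variable {α β : Type*} [MeasurableSpace α] [MeasurableSpace β]

lemma integrable_of_bdd {m : Measure α} [IsFiniteMeasure m] {f : α → ℝ} {C : ℝ}
    (hf : AEStronglyMeasurable f m) (h : ∀ x, |f x| ≤ C) : Integrable f m :=
  Integrable.mono' (integrable_const C) hf
    (Filter.Eventually.of_forall (fun x => by simpa [Real.norm_eq_abs] using h x))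

lemma tvdist_bddAbove (P Q : Measure α) [IsFiniteMeasure P] [IsFiniteMeasure Q] :
    BddAbove {r | ∃ f : α → ℝ, Measurable f ∧ (∀ x, |f x| ≤ 1 / 2) ∧
      r = (∫ x, f x ∂P) - ∫ x, f x ∂Q} := by
  refine ⟨1 / 2 * (P Set.univ).toReal + 1 / 2 * (Q Set.univ).toReal, ?_⟩
  rintro r ⟨f, hf, hfb, rfl⟩
  have h1 : ‖∫ x, f x ∂P‖ ≤ 1 / 2 * (P Set.univ).toReal :=
    norm_integral_le_of_norm_le_const
      (Filter.Eventually.of_forall fun x => by simpa [Real.norm_eq_abs] using hfb x)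
  have h2 : ‖∫ x, f x ∂Q‖ ≤ 1 / 2 * (Q Set.univ).toReal :=
    norm_integral_le_of_norm_le_const
      (Filter.Eventually.of_forall fun x => by simpa [Real.norm_eq_abs] using hfb x)
  rw [Real.norm_eq_abs, abs_le] at h1 h2
  linarith [h1.1, h1.2, h2.1, h2.2]

lemma tvdist_nonneg (P Q : Measure α) : 0 ≤ TVDist P Q :=
  Real.sSup_nonneg' ⟨0, ⟨fun _ => (0:ℝ), measurable_const, fun _ => by norm_num, by simp⟩, le_rfl⟩

lemma le_tvdist (P Q : Measure α) [IsFiniteMeasure P] [IsFiniteMeasure Q]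
    {f : α → ℝ} (hf : Measurable f) (hfb : ∀ x, |f x| ≤ 1 / 2) :
    (∫ x, f x ∂P) - ∫ x, f x ∂Q ≤ TVDist P Q :=
  le_csSup (tvdist_bddAbove P Q) ⟨f, hf, hfb, rfl⟩

lemma tvdist_le (P Q : Measure α) {B : ℝ} (hB : 0 ≤ B)
    (h : ∀ f : α → ℝ, Measurable f → (∀ x, |f x| ≤ 1 / 2) →
      (∫ x, f x ∂P) - ∫ x, f x ∂Q ≤ B) :
    TVDist P Q ≤ B :=
  Real.sSup_le (by rintro r ⟨f, hf, hfb, rfl⟩; exact h f hf hfb) hB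

lemma wass_le_coupling [PseudoMetricSpace α] {P Q : Measure α} (π : Measure (α × α))
    (h1 : π.map Prod.fst = P) (h2 : π.map Prod.snd = Q) :
    Wass P Q ≤ ∫ p, dist p.1 p.2 ∂π := by
  refine csInf_le ⟨0, ?_⟩ ⟨π, h1, h2, rfl⟩
  rintro r ⟨π', _, _, rfl⟩
  exact integral_nonneg fun p => dist_nonneg

lemma isProb_bind (ν : Measure α) [IsProbabilityMeasure ν] (κ : α → Measure β)
    (hκ : Measurable κ) (hκp : ∀ z, IsProbabilityMeasure (κ z)) :
    IsProbabilityMeasure (ν.bind κ) := by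
  constructor
  rw [Measure.bind_apply MeasurableSet.univ hκ.aemeasurable]
  simp only [measure_univ, lintegral_one]

lemma measurable_integral_of_bdd (κ : α → Measure β) (hκ : Measurable κ)
    (hκp : ∀ z, IsProbabilityMeasure (κ z)) {g : β → ℝ} (hg : Measurable g) {C : ℝ}
    (hgb : ∀ x, |g x| ≤ C) :
    Measurable fun z => ∫ x, g x ∂(κ z) := by
  have hint : ∀ z, Integrable g (κ z) := fun z =>
    integrable_of_bdd hg.aestronglyMeasurable hgb
  have heq : (fun z => ∫ x, g x ∂(κ z)) = fun z =>
      (∫⁻ x, ENNReal.ofReal (g x) ∂(κ z)).toReal -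
      (∫⁻ x, ENNReal.ofReal (-g x) ∂(κ z)).toReal :=
    funext fun z => integral_eq_lintegral_pos_part_sub_lintegral_neg_part (hint z)
  rw [heq]
  exact (((Measure.measurable_lintegral hg.ennreal_ofReal).comp hκ).ennreal_toReal).sub
    (((Measure.measurable_lintegral hg.neg.ennreal_ofReal).comp hκ).ennreal_toReal)

lemma integral_bind_of_bdd (ν : Measure α) [IsProbabilityMeasure ν] (κ : α → Measure β)
    (hκ : Measurable κ) (hκp : ∀ z, IsProbabilityMeasure (κ z)) {g : β → ℝ}
    (hg : Measurable g) (hgb : ∀ x, |g x| ≤ 1 / 2) :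
    ∫ x, g x ∂(ν.bind κ) = ∫ z, ∫ x, g x ∂(κ z) ∂ν := by
  haveI := isProb_bind ν κ hκ hκp
  have key : ∀ h : β → ℝ≥0∞, Measurable h → (∀ x, h x ≤ 1) →
      ∫ z, (∫⁻ x, h x ∂(κ z)).toReal ∂ν = (∫⁻ x, h x ∂(ν.bind κ)).toReal := by
    intro h hh hb
    have hm : Measurable fun z => ∫⁻ x, h x ∂(κ z) := (Measure.measurable_lintegral hh).comp hκ
    rw [Measure.lintegral_bind hκ.aemeasurable hh.aemeasurable]
    exact integral_toReal hm.aemeasurable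
      (Filter.Eventually.of_forall fun z => lt_of_le_of_lt
        (le_trans (lintegral_mono hb) (by simp)) ENNReal.one_lt_top)
  have hb1 : ∀ x, ENNReal.ofReal (g x) ≤ 1 := fun x => by
    refine le_trans (ENNReal.ofReal_le_ofReal ?_) (by norm_num : ENNReal.ofReal 1 ≤ 1)
    have := (abs_le.mp (hgb x)).2; linarith
  have hb2 : ∀ x, ENNReal.ofReal (-g x) ≤ 1 := fun x => by
    refine le_trans (ENNReal.ofReal_le_ofReal ?_) (by norm_num : ENNReal.ofReal 1 ≤ 1)
    have := (abs_le.mp (hgb x)).1; linarith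
  have hint : ∀ z, Integrable g (κ z) := fun z =>
    integrable_of_bdd hg.aestronglyMeasurable hgb
  have hrw : (fun z => ∫ x, g x ∂(κ z)) = fun z =>
      (∫⁻ x, ENNReal.ofReal (g x) ∂(κ z)).toReal -
      (∫⁻ x, ENNReal.ofReal (-g x) ∂(κ z)).toReal :=
    funext fun z => integral_eq_lintegral_pos_part_sub_lintegral_neg_part (hint z)
  have hIa : Integrable (fun z => (∫⁻ x, ENNReal.ofReal (g x) ∂(κ z)).toReal) ν := by
    refine integrable_of_bdd
      ((((Measure.measurable_lintegral hg.ennreal_ofReal).comp hκ).ennreal_toReal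
        ).aestronglyMeasurable) (C := 1) fun z => ?_
    rw [abs_of_nonneg ENNReal.toReal_nonneg]
    refine ENNReal.toReal_le_of_le_ofReal zero_le_one ?_
    simpa using le_trans (lintegral_mono (hb1)) (by simp)
  have hIb : Integrable (fun z => (∫⁻ x, ENNReal.ofReal (-g x) ∂(κ z)).toReal) ν := by
    refine integrable_of_bdd
      ((((Measure.measurable_lintegral hg.neg.ennreal_ofReal).comp hκ).ennreal_toReal
        ).aestronglyMeasurable) (C := 1) fun z => ?_
    rw [abs_of_nonneg ENNReal.toReal_nonneg]
    refine ENNReal.toReal_le_of_le_ofReal zero_le_one ?_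
    simpa using le_trans (lintegral_mono (hb2)) (by simp)
  rw [integral_eq_lintegral_pos_part_sub_lintegral_neg_part
    (integrable_of_bdd hg.aestronglyMeasurable hgb), hrw, integral_sub hIa hIb,
    key _ hg.ennreal_ofReal hb1, key (fun x => ENNReal.ofReal (-g x)) hg.neg.ennreal_ofReal hb2]

/-- Wasserstein is bounded by total variation on spaces of diameter at most 1. -/
lemma wass_le_tvdist {α : Type*} [MeasurableSpace α] [PseudoMetricSpace α]
    [OpensMeasurableSpace α] [SecondCountableTopology α]
    (hd : ∀ a b : α, dist a b ≤ 1)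
    (P Q : Measure α) [IsProbabilityMeasure P] [IsProbabilityMeasure Q] :
    Wass P Q ≤ TVDist P Q := by
  classical
  set lam : Measure α := P + Q with hlam
  have hPac : P ≪ lam := (Measure.le_add_right le_rfl).absolutelyContinuous
  have hQac : Q ≪ lam := (Measure.le_add_left le_rfl).absolutelyContinuous
  set f := P.rnDeriv lam with hfdef
  set g := Q.rnDeriv lam with hgdef
  have hfm : Measurable f := Measure.measurable_rnDeriv _ _
  have hgm : Measurable g := Measure.measurable_rnDeriv _ _
  have hP : lam.withDensity f = P := Measure.withDensity_rnDeriv_eq _ _ hPac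
  have hQ : lam.withDensity g = Q := Measure.withDensity_rnDeriv_eq _ _ hQac
  set h : α → ℝ≥0∞ := fun x => min (f x) (g x) with hhdef
  have hhm : Measurable h := hfm.min hgm
  set c := lam.withDensity h with hcdef
  set r1 := lam.withDensity (fun x => f x - h x) with hr1def
  set r2 := lam.withDensity (fun x => g x - h x) with hr2def
  have hPc : c + r1 = P := by
    rw [hcdef, hr1def, ← withDensity_add_left hhm, ← hP]
    congr 1
    funext x
    exact add_tsub_cancel_of_le (min_le_left _ _)
  have hQc : c + r2 = Q := by
    rw [hcdef, hr2def, ← withDensity_add_left hhm, ← hQ]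
    congr 1
    funext x
    exact add_tsub_cancel_of_le (min_le_right _ _)
  have hmass1 : c Set.univ + r1 Set.univ = 1 := by
    have := congrArg (fun m : Measure α => m Set.univ) hPc
    simpa using this
  have hmass2 : c Set.univ + r2 Set.univ = 1 := by
    have := congrArg (fun m : Measure α => m Set.univ) hQc
    simpa using this
  have hcne : c Set.univ ≠ ∞ := by
    intro hc
    rw [hc] at hmass1
    simp at hmass1
  have hr12 : r1 Set.univ = r2 Set.univ := by
    have := hmass1.trans hmass2.symm
    exact (ENNReal.add_right_inj hcne).mp this
  set T := r1 Set.univ with hTdef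
  have hT1 : T ≤ 1 := by
    rw [← hmass1]; exact le_add_self
  have hTne : T ≠ ∞ := ne_top_of_le_ne_top ENNReal.one_ne_top hT1
  -- the set A where f > g
  set A : Set α := {x | g x < f x} with hAdef
  have hA : MeasurableSet A := measurableSet_lt hgm hfm
  have hQAle : Q A ≤ P A := by
    rw [← Measure.setLIntegral_rnDeriv' hQac hA, ← Measure.setLIntegral_rnDeriv' hPac hA,
      ← hfdef, ← hgdef]
    refine lintegral_mono_ae ((ae_restrict_iff' hA).mpr
      (Filter.Eventually.of_forall fun x hx => le_of_lt hx))
  have hTval : T = P A - Q A := by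
    have hind : (fun x => f x - h x) = A.indicator (fun x => f x - g x) := by
      funext x
      by_cases hx : x ∈ A
      · rw [Set.indicator_of_mem hx]
        have : h x = g x := min_eq_right (le_of_lt hx)
        rw [this]
      · rw [Set.indicator_of_notMem hx]
        have hfg : f x ≤ g x := not_lt.mp hx
        have : h x = f x := min_eq_left hfg
        rw [this, tsub_self]
    have hQA : ∫⁻ x in A, g x ∂lam = Q A := Measure.setLIntegral_rnDeriv' hQac hA
    have hPA : ∫⁻ x in A, f x ∂lam = P A := Measure.setLIntegral_rnDeriv' hPac hA
    have hQAne : ∫⁻ x in A, g x ∂lam ≠ ∞ := by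
      rw [hQA]; exact measure_ne_top _ _
    rw [hTdef, hr1def, withDensity_apply _ MeasurableSet.univ, Measure.restrict_univ, hind,
      lintegral_indicator hA, lintegral_sub (hgm.mono le_rfl le_rfl) hQAne
        ((ae_restrict_iff' hA).mpr (Filter.Eventually.of_forall fun x hx => le_of_lt hx)),
      hQA, hPA]
  -- the test function
  set φ : α → ℝ := fun x => if x ∈ A then (1 / 2 : ℝ) else -(1 / 2) with hφdef
  have hφm : Measurable φ := Measurable.ite hA measurable_const measurable_const
  have hφb : ∀ x, |φ x| ≤ 1 / 2 := by
    intro x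
    by_cases hx : x ∈ A <;> simp [hφdef, hx, abs_le] <;> norm_num
  have hφint : ∀ (m : Measure α) [IsProbabilityMeasure m],
      ∫ x, φ x ∂m = (m A).toReal - 1 / 2 := by
    intro m _
    have : φ = fun x => A.indicator (fun _ => (1 : ℝ)) x - 1 / 2 := by
      funext x
      by_cases hx : x ∈ A <;> simp [hφdef, hx] <;> norm_num
    rw [this, integral_sub ((integrable_const (1 : ℝ)).indicator hA) (integrable_const _),
      integral_indicator_const _ hA, integral_const]
    simp; rfl
  have hTV : (P A).toReal - (Q A).toReal ≤ TVDist P Q := by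
    have := le_tvdist P Q hφm hφb
    rw [hφint P, hφint Q] at this
    linarith
  have hTtoReal : T.toReal = (P A).toReal - (Q A).toReal := by
    rw [hTval, ENNReal.toReal_sub_of_le hQAle (measure_ne_top _ _)]
  -- case on T = 0
  by_cases hT0 : T = 0
  · have hr1z : r1 = 0 := Measure.measure_univ_eq_zero.mp hT0
    have hr2z : r2 = 0 := Measure.measure_univ_eq_zero.mp (hr12.symm.trans hT0)
    have hPQ : P = Q := by
      rw [← hPc, ← hQc, hr1z, hr2z]
    set π : Measure (α × α) := P.map (fun x => (x, x)) with hπdef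
    have hdiag : Measurable fun x : α => (x, x) := measurable_id.prodMk measurable_id
    have h1 : π.map Prod.fst = P := by
      rw [hπdef, Measure.map_map measurable_fst hdiag]
      exact Measure.map_id'
    have h2 : π.map Prod.snd = Q := by
      rw [hπdef, Measure.map_map measurable_snd hdiag, hPQ]
      exact Measure.map_id'
    refine le_trans (wass_le_coupling π h1 h2) ?_
    have : ∫ p, dist p.1 p.2 ∂π = 0 := by
      rw [hπdef, integral_map hdiag.aemeasurable
        (continuous_dist.aestronglyMeasurable)]
      simp
    rw [this]
    exact tvdist_nonneg P Q
  · -- nontrivial coupling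
    haveI hr1fin : IsFiniteMeasure r1 := ⟨lt_of_le_of_lt (le_of_eq hTdef.symm)
      (lt_of_le_of_lt hT1 ENNReal.one_lt_top)⟩
    haveI hr2fin : IsFiniteMeasure r2 := ⟨by
      rw [← hr12]
      exact lt_of_le_of_lt hT1 ENNReal.one_lt_top⟩
    haveI hcfin : IsFiniteMeasure c := ⟨lt_of_le_of_lt (le_of_eq rfl)
      (lt_of_le_of_lt (by rw [← hmass1]; exact le_self_add) ENNReal.one_lt_top)⟩
    set s : Measure (α × α) := T⁻¹ • (r1.prod r2) with hsdef
    have hdiag : Measurable fun x : α => (x, x) := measurable_id.prodMk measurable_id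
    set π : Measure (α × α) := c.map (fun x => (x, x)) + s with hπdef
    have hfst : π.map Prod.fst = P := by
      have hcid : Measure.map (Prod.fst ∘ fun x : α => (x, x)) c = c := Measure.map_id'
      rw [hπdef, Measure.map_add _ _ measurable_fst, Measure.map_map measurable_fst hdiag,
        hcid, hsdef, Measure.map_smul, Measure.map_fst_prod, ← hr12,
        smul_smul, ENNReal.inv_mul_cancel hT0 hTne, one_smul]
      exact hPc
    have hsnd : π.map Prod.snd = Q := by
      have hcid : Measure.map (Prod.snd ∘ fun x : α => (x, x)) c = c := Measure.map_id'
      rw [hπdef, Measure.map_add _ _ measurable_snd, Measure.map_map measurable_snd hdiag,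
        hcid, hsdef, Measure.map_smul, Measure.map_snd_prod, ← hTdef,
        smul_smul, ENNReal.inv_mul_cancel hT0 hTne, one_smul]
      exact hQc
    refine le_trans (wass_le_coupling π hfst hsnd) ?_
    have hsuniv : s Set.univ = T := by
      rw [hsdef, Measure.smul_apply, smul_eq_mul, ← Set.univ_prod_univ, Measure.prod_prod,
        ← hr12, ← hTdef, ← mul_assoc, ENNReal.inv_mul_cancel hT0 hTne, one_mul]
    haveI hsfin : IsFiniteMeasure s := ⟨by
      rw [hsuniv]; exact lt_of_le_of_lt hT1 ENNReal.one_lt_top⟩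
    haveI : IsFiniteMeasure (c.map (fun x : α => (x, x))) := by
      constructor
      rw [Measure.map_apply hdiag MeasurableSet.univ]
      exact measure_lt_top _ _
    have hdb : ∀ p : α × α, |dist p.1 p.2| ≤ 1 := fun p => by
      rw [abs_of_nonneg dist_nonneg]; exact hd _ _
    have hint1 : Integrable (fun p : α × α => dist p.1 p.2) (c.map fun x => (x, x)) :=
      integrable_of_bdd continuous_dist.aestronglyMeasurable hdb
    have hint2 : Integrable (fun p : α × α => dist p.1 p.2) s :=
      integrable_of_bdd continuous_dist.aestronglyMeasurable hdb
    rw [hπdef, integral_add_measure hint1 hint2]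
    have hz : ∫ p, dist p.1 p.2 ∂(c.map fun x => (x, x)) = 0 := by
      rw [integral_map hdiag.aemeasurable continuous_dist.aestronglyMeasurable]
      simp
    have hs1 : ∫ p, dist p.1 p.2 ∂s ≤ T.toReal := by
      calc ∫ p, dist p.1 p.2 ∂s ≤ ∫ _, (1 : ℝ) ∂s :=
            integral_mono hint2 (integrable_const _) fun p => hd _ _
        _ = (s Set.univ).toReal := by rw [integral_const]; simp; rfl
        _ = T.toReal := by rw [hsuniv]
    rw [hz, zero_add]
    refine le_trans hs1 ?_
    rw [hTtoReal]
    exact hTV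

end AuxLemmas

section GeomAux

open MeasureTheory

lemma cIdx_le' (η : ℕ) (t : I01) : cIdx η t ≤ 2 ^ η - 1 := min_le_right _ _

lemma cIdx_bounds (η : ℕ) (t : I01) :
    (cIdx η t : ℝ) ≤ (t : ℝ) * 2 ^ η ∧ (t : ℝ) * 2 ^ η ≤ cIdx η t + 1 := by
  have h2 : (0 : ℝ) < 2 ^ η := by positivity
  have ht0 : 0 ≤ (t : ℝ) := t.2.1
  have ht1 : (t : ℝ) ≤ 1 := t.2.2
  have hnn : 0 ≤ (t : ℝ) * 2 ^ η := by positivity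
  by_cases hn : ⌊(t : ℝ) * 2 ^ η⌋₊ ≤ 2 ^ η - 1
  · have he : cIdx η t = ⌊(t : ℝ) * 2 ^ η⌋₊ := min_eq_left hn
    rw [he]
    exact ⟨Nat.floor_le hnn, (Nat.lt_floor_add_one _).le⟩
  · push_neg at hn
    have hge : 2 ^ η ≤ ⌊(t : ℝ) * 2 ^ η⌋₊ := by omega
    have he : cIdx η t = 2 ^ η - 1 := min_eq_right (by omega)
    have hcast : ((2 ^ η - 1 : ℕ) : ℝ) = 2 ^ η - 1 := by
      rw [Nat.cast_sub Nat.one_le_two_pow]; push_cast; ring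
    rw [he, hcast]
    have hle : ((2 : ℝ) ^ η) ≤ (t : ℝ) * 2 ^ η := by
      have := (Nat.le_floor_iff hnn).mp hge
      push_cast at this
      exact this
    constructor
    · linarith
    · nlinarith

lemma cMid_val (η : ℕ) (t : I01) : (cMid η t : ℝ) = ((cIdx η t : ℝ) + 1 / 2) / 2 ^ η := rfl

lemma cIdx_cMid (η : ℕ) (t : I01) : cIdx η (cMid η t) = cIdx η t := by
  have h2 : (0 : ℝ) < 2 ^ η := by positivity
  have hv : ((cMid η t : ℝ)) * 2 ^ η = (cIdx η t : ℝ) + 1 / 2 := by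
    rw [cMid_val]; field_simp
  have hfl : ⌊((cMid η t : ℝ)) * 2 ^ η⌋₊ = cIdx η t := by
    rw [hv, Nat.floor_eq_iff (by positivity)]
    constructor
    · linarith
    · push_cast; linarith
  show min ⌊((cMid η t : ℝ)) * 2 ^ η⌋₊ (2 ^ η - 1) = cIdx η t
  rw [hfl]
  exact min_eq_left (cIdx_le' η t)

lemma cMid_congr (η : ℕ) {t s : I01} (h : cIdx η t = cIdx η s) : cMid η t = cMid η s :=
  Subtype.ext (by rw [cMid_val, cMid_val, h])

lemma cMid_cMid (η : ℕ) (t : I01) : cMid η (cMid η t) = cMid η t :=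
  cMid_congr η (cIdx_cMid η t)

lemma dist_I01_le_one (a b : I01) : dist a b ≤ 1 := by
  rw [Subtype.dist_eq, Real.dist_eq]
  have h1 := a.2.1; have h2 := a.2.2; have h3 := b.2.1; have h4 := b.2.2
  rw [abs_le]; constructor <;> linarith

lemma dist_to_cMid (η : ℕ) {t s : I01} (h : cIdx η t = cIdx η s) :
    dist t (cMid η s) ≤ (2 ^ η : ℝ)⁻¹ / 2 := by
  have h2 : (0 : ℝ) < 2 ^ η := by positivity
  obtain ⟨hb1, hb2⟩ := cIdx_bounds η t
  rw [Subtype.dist_eq, Real.dist_eq, cMid_val, ← h]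
  have e : (t : ℝ) - ((cIdx η t : ℝ) + 1 / 2) / 2 ^ η
      = ((t : ℝ) * 2 ^ η - ((cIdx η t : ℝ) + 1 / 2)) / 2 ^ η := by
    field_simp
  rw [e, abs_div, abs_of_pos h2, div_le_iff₀ h2]
  have hrhs : (2 ^ η : ℝ)⁻¹ / 2 * 2 ^ η = 1 / 2 := by field_simp
  rw [hrhs, abs_le]
  constructor <;> linarith

lemma dist_cMid_lb (η : ℕ) {t s : I01} (h : cIdx η t ≠ cIdx η s) :
    (2 ^ η : ℝ)⁻¹ ≤ dist (cMid η t) (cMid η s) := by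
  have h2 : (0 : ℝ) < 2 ^ η := by positivity
  rw [Subtype.dist_eq, Real.dist_eq, cMid_val, cMid_val]
  have e : ((cIdx η t : ℝ) + 1 / 2) / 2 ^ η - ((cIdx η s : ℝ) + 1 / 2) / 2 ^ η
      = ((cIdx η t : ℝ) - (cIdx η s : ℝ)) / 2 ^ η := by
    field_simp; ring
  rw [e, abs_div, abs_of_pos h2, le_div_iff₀ h2, inv_mul_cancel₀ (ne_of_gt h2)]
  have hZ : (1 : ℤ) ≤ |(cIdx η t : ℤ) - (cIdx η s : ℤ)| := by
    have hne : (cIdx η t : ℤ) ≠ (cIdx η s : ℤ) := by exact_mod_cast h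
    exact Int.one_le_abs (sub_ne_zero.mpr hne)
  calc (1 : ℝ) = ((1 : ℤ) : ℝ) := by norm_num
    _ ≤ ((|(cIdx η t : ℤ) - (cIdx η s : ℤ)| : ℤ) : ℝ) := by exact_mod_cast hZ
    _ = |(cIdx η t : ℝ) - (cIdx η s : ℝ)| := by push_cast; ring

lemma measurable_cIdx (η : ℕ) : Measurable (cIdx η) := by
  have h1 : Measurable fun t : I01 => (t : ℝ) * 2 ^ η :=
    measurable_subtype_coe.mul_const _
  have h2 : Measurable fun t : I01 => ⌊(t : ℝ) * 2 ^ η⌋₊ := Nat.measurable_floor.comp h1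
  exact (measurable_from_top (f := fun n : ℕ => min n (2 ^ η - 1))).comp h2

lemma measurable_cMid (η : ℕ) : Measurable (cMid η) := by
  have h : Measurable fun t : I01 => ((cIdx η t : ℝ) + 1 / 2) / 2 ^ η :=
    (((measurable_from_top (f := fun n : ℕ => (n : ℝ))).comp (measurable_cIdx η)).add_const
      _).div_const _
  exact Measurable.subtype_mk h

lemma isProb_condOn {α : Type*} [MeasurableSpace α] (m : Measure α) [IsFiniteMeasure m]
    (s : Set α) (x₀ : α) : IsProbabilityMeasure (condOn m s x₀) := by
  unfold condOn
  split_ifs with h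
  · infer_instance
  · constructor
    rw [Measure.smul_apply, Measure.restrict_apply_univ, smul_eq_mul,
      ENNReal.inv_mul_cancel h (measure_ne_top m s)]

lemma condOn_self {α : Type*} [MeasurableSpace α] (m : Measure α) [IsFiniteMeasure m]
    {s : Set α} (hs : MeasurableSet s) {x₀ : α} (hx : x₀ ∈ s) : condOn m s x₀ s = 1 := by
  unfold condOn
  split_ifs with h
  · rw [Measure.dirac_apply' _ hs]
    simp [hx]
  · rw [Measure.smul_apply, Measure.restrict_apply hs, Set.inter_self, smul_eq_mul,
      ENNReal.inv_mul_cancel h (measure_ne_top m s)]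

end GeomAux
/-- Lemma: the kernels of `μ^M` are `(2L+1)`-Lipschitz in Wasserstein.
If `G` has no colliders and `μ ∈ P_G` satisfies the TV-Lipschitz kernel assumption with
constant `L`, then for every `2 ≤ k ≤ K` and all midpoints `x_pa(k), x̃_pa(k) ∈ M_pa(k)`,
`W(μ^M(dx_k|x_pa(k)), μ^M(dx_k|x̃_pa(k))) ≤ (2L+1)‖x_pa(k) − x̃_pa(k)‖`. -/
theorem stmt14 {K : ℕ} (d : Fin K → ℕ) (pa : Fin K → Finset (Fin K))
    (hsort : SortedGraph pa) (hnc : NoColliders pa) (L : ℝ) (η : ℕ)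
    (μ : Measure (Pt d)) (hμ : IsProbabilityMeasure μ)
    (hPG : MemPG d pa μ) (hTV : TVLip d pa L μ) :
    ∀ k : Fin K, 1 ≤ k.1 →
      ∀ κ : PtOn d (pa k) → Measure (PtOn d ({k} : Finset (Fin K))),
        IsCondD d μ (pa k) {k} κ →
        (∀ x x', TVDist (κ x) (κ x') ≤ L * dist x x') →
        ∀ y y' : PtOn d (pa k),
          (∀ j i, y j i ∈ Set.range (cMid η)) → (∀ j i, y' j i ∈ Set.range (cMid η)) →
          Wass (kerM d pa η μ k κ y) (kerM d pa η μ k κ y')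
            ≤ (2 * L + 1) * dist y y' := by
  intro k hk1 κ hκ hκlip y y' hy hy'
  classical
  obtain ⟨hκm, hκp, -⟩ := hκ
  have hyj : ∀ j i, cMid η (y j i) = y j i := by
    intro j i
    obtain ⟨t, ht⟩ := hy j i
    rw [← ht, cMid_cMid]
  have hy'j : ∀ j i, cMid η (y' j i) = y' j i := by
    intro j i
    obtain ⟨t, ht⟩ := hy' j i
    rw [← ht, cMid_cMid]
  have hLd : 0 ≤ L * dist y y' := le_trans (tvdist_nonneg (κ y) (κ y')) (hκlip y y')
  by_cases hyy : y = y'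
  · subst hyy
    set M := kerM d pa η μ k κ y with hM
    set π : Measure (PtOn d ({k} : Finset (Fin K)) × PtOn d ({k} : Finset (Fin K))) :=
      M.map (fun x => (x, x)) with hπ
    have hdiag : Measurable fun x : PtOn d ({k} : Finset (Fin K)) => (x, x) :=
      measurable_id.prodMk measurable_id
    have h1 : π.map Prod.fst = M := by
      rw [hπ, Measure.map_map measurable_fst hdiag]; exact Measure.map_id'
    have h2 : π.map Prod.snd = M := by
      rw [hπ, Measure.map_map measurable_snd hdiag]; exact Measure.map_id'
    refine le_trans (wass_le_coupling π h1 h2) ?_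
    have hz : ∫ p, dist p.1 p.2 ∂π = 0 := by
      rw [hπ, integral_map hdiag.aemeasurable continuous_dist.aestronglyMeasurable]
      simp
    rw [hz]
    simp [dist_self]
  · -- main case: different midpoints
    have hproj : Measurable (projOn d (pa k)) :=
      measurable_pi_lambda _ fun j => measurable_pi_apply j.1
    set P0 := μ.map (projOn d (pa k)) with hP0
    haveI : IsProbabilityMeasure P0 := Measure.isProbabilityMeasure_map hproj.aemeasurable
    have hcellmeas : ∀ x : PtOn d (pa k), MeasurableSet (cellOn d η (pa k) x) := by
      intro x
      have he : cellOn d η (pa k) x =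
          ⋂ j, ⋂ i, {z : PtOn d (pa k) | cIdx η (z j i) = cIdx η (x j i)} := by
        ext z
        simp only [cellOn, Set.mem_setOf_eq, Set.mem_iInter]
      rw [he]
      exact MeasurableSet.iInter fun j => MeasurableSet.iInter fun i =>
        ((measurable_cIdx η).comp ((measurable_pi_apply i).comp (measurable_pi_apply j)))
          (measurableSet_singleton _)
    set ν := condOn P0 (cellOn d η (pa k) y) (midPtOn d η (pa k) y) with hν
    set ν' := condOn P0 (cellOn d η (pa k) y') (midPtOn d η (pa k) y') with hν'
    haveI : IsProbabilityMeasure ν := isProb_condOn _ _ _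
    haveI : IsProbabilityMeasure ν' := isProb_condOn _ _ _
    have hmem : ∀ x : PtOn d (pa k), midPtOn d η (pa k) x ∈ cellOn d η (pa k) x :=
      fun x j i => cIdx_cMid η (x j i)
    have hν1 : ν (cellOn d η (pa k) y) = 1 := condOn_self P0 (hcellmeas y) (hmem y)
    have hν'1 : ν' (cellOn d η (pa k) y') = 1 := condOn_self P0 (hcellmeas y') (hmem y')
    set mid2 := midPtOn d η ({k} : Finset (Fin K)) with hmid2
    have hmid2m : Measurable mid2 :=
      measurable_pi_lambda _ fun j => measurable_pi_lambda _ fun i =>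
        (measurable_cMid η).comp ((measurable_pi_apply i).comp (measurable_pi_apply j))
    set m1 := ν.bind κ with hm1
    set m1' := ν'.bind κ with hm1'
    haveI : IsProbabilityMeasure m1 := isProb_bind ν κ hκm hκp
    haveI : IsProbabilityMeasure m1' := isProb_bind ν' κ hκm hκp
    haveI : IsProbabilityMeasure (m1.map mid2) := Measure.isProbabilityMeasure_map hmid2m.aemeasurable
    haveI : IsProbabilityMeasure (m1'.map mid2) := Measure.isProbabilityMeasure_map hmid2m.aemeasurable
    -- distance lower bound
    have hδpos : (0 : ℝ) < (2 ^ η : ℝ)⁻¹ := by positivity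
    have hylb : (2 ^ η : ℝ)⁻¹ ≤ dist y y' := by
      have hco : ∃ j i, y j i ≠ y' j i := by
        by_contra hco
        push_neg at hco
        exact hyy (funext fun j => funext fun i => hco j i)
      obtain ⟨j, i, hne⟩ := hco
      have hcine : cIdx η (y j i) ≠ cIdx η (y' j i) := by
        intro hci
        exact hne (by rw [← hyj j i, ← hy'j j i, cMid_congr η hci])
      calc (2 ^ η : ℝ)⁻¹ ≤ dist (cMid η (y j i)) (cMid η (y' j i)) := dist_cMid_lb η hcine
        _ = dist (y j i) (y' j i) := by rw [hyj j i, hy'j j i]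
        _ ≤ dist (y j) (y' j) := dist_le_pi_dist _ _ i
        _ ≤ dist y y' := dist_le_pi_dist _ _ j
    have hdyy : 0 < dist y y' := lt_of_lt_of_le hδpos hylb
    have hL0 : 0 ≤ L := nonneg_of_mul_nonneg_right (by linarith [hLd] : 0 ≤ dist y y' * L) hdyy
    -- distance upper bound between cells
    have hzz' : ∀ z ∈ cellOn d η (pa k) y, ∀ z' ∈ cellOn d η (pa k) y',
        dist z z' ≤ 2 * dist y y' := by
      intro z hz z' hz'
      have hb : dist z z' ≤ dist y y' + (2 ^ η : ℝ)⁻¹ := by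
        rw [dist_pi_le_iff (add_nonneg dist_nonneg hδpos.le)]
        intro j
        rw [dist_pi_le_iff (add_nonneg dist_nonneg hδpos.le)]
        intro i
        have h1 : dist (z j i) (y j i) ≤ (2 ^ η : ℝ)⁻¹ / 2 := by
          have := dist_to_cMid η (hz j i)
          rwa [hyj j i] at this
        have h2 : dist (z' j i) (y' j i) ≤ (2 ^ η : ℝ)⁻¹ / 2 := by
          have := dist_to_cMid η (hz' j i)
          rwa [hy'j j i] at this
        have h3 : dist (y j i) (y' j i) ≤ dist y y' :=
          le_trans (dist_le_pi_dist _ _ i) (dist_le_pi_dist y y' j)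
        calc dist (z j i) (z' j i)
            ≤ dist (z j i) (y j i) + dist (y j i) (y' j i) + dist (y' j i) (z' j i) :=
              dist_triangle4 _ _ _ _
          _ ≤ (2 ^ η : ℝ)⁻¹ / 2 + dist y y' + (2 ^ η : ℝ)⁻¹ / 2 := by
              have h2' : dist (y' j i) (z' j i) ≤ (2 ^ η : ℝ)⁻¹ / 2 := by
                rw [dist_comm]; exact h2
              linarith
          _ = dist y y' + (2 ^ η : ℝ)⁻¹ := by ring
      linarith
    -- total variation bound
    have hTVle : TVDist (m1.map mid2) (m1'.map mid2) ≤ 2 * L * dist y y' := by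
      refine tvdist_le _ _ (by nlinarith) ?_
      intro f hf hfb
      have hgm : Measurable fun x => f (mid2 x) := hf.comp hmid2m
      have hgb : ∀ x, |f (mid2 x)| ≤ 1 / 2 := fun x => hfb _
      have e1 : ∫ x, f x ∂(m1.map mid2) = ∫ x, f (mid2 x) ∂m1 :=
        integral_map hmid2m.aemeasurable hf.aestronglyMeasurable
      have e2 : ∫ x, f x ∂(m1'.map mid2) = ∫ x, f (mid2 x) ∂m1' :=
        integral_map hmid2m.aemeasurable hf.aestronglyMeasurable
      rw [e1, e2, hm1, hm1', integral_bind_of_bdd ν κ hκm hκp hgm hgb,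
        integral_bind_of_bdd ν' κ hκm hκp hgm hgb]
      set F := fun z => ∫ x, f (mid2 x) ∂(κ z) with hF
      have hFm : Measurable F := measurable_integral_of_bdd κ hκm hκp hgm hgb
      have hFb : ∀ z, |F z| ≤ 1 / 2 := by
        intro z
        haveI := hκp z
        have hnorm := norm_integral_le_of_norm_le_const (μ := κ z) (C := 1 / 2)
          (f := fun x => f (mid2 x))
          (Filter.Eventually.of_forall fun x => by simpa [Real.norm_eq_abs] using hgb x)
        simpa [Real.norm_eq_abs, measure_univ] using hnorm
      set W := ν.prod ν' with hW
      haveI : IsProbabilityMeasure W := by rw [hW]; infer_instance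
      have hI1 : Integrable (fun p : PtOn d (pa k) × PtOn d (pa k) => F p.1) W :=
        integrable_of_bdd ((hFm.comp measurable_fst).aestronglyMeasurable) fun p => hFb _
      have hI2 : Integrable (fun p : PtOn d (pa k) × PtOn d (pa k) => F p.2) W :=
        integrable_of_bdd ((hFm.comp measurable_snd).aestronglyMeasurable) fun p => hFb _
      have eF1 : ∫ z, F z ∂ν = ∫ p, F p.1 ∂W := by
        have hfst : W.map Prod.fst = ν := by
          rw [hW, Measure.map_fst_prod, measure_univ, one_smul]
        rw [← hfst, integral_map measurable_fst.aemeasurable hFm.aestronglyMeasurable]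
      have eF2 : ∫ z, F z ∂ν' = ∫ p, F p.2 ∂W := by
        have hsnd : W.map Prod.snd = ν' := by
          rw [hW, Measure.map_snd_prod, measure_univ, one_smul]
        rw [← hsnd, integral_map measurable_snd.aemeasurable hFm.aestronglyMeasurable]
      rw [eF1, eF2, ← integral_sub hI1 hI2]
      have hae : ∀ᵐ p ∂W, p ∈ (cellOn d η (pa k) y) ×ˢ (cellOn d η (pa k) y') := by
        have hWS : W ((cellOn d η (pa k) y) ×ˢ (cellOn d η (pa k) y')) = 1 := by
          rw [hW, Measure.prod_prod, hν1, hν'1, mul_one]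
        have hcompl : W (((cellOn d η (pa k) y) ×ˢ (cellOn d η (pa k) y'))ᶜ) = 0 := by
          have hc := measure_compl ((hcellmeas y).prod (hcellmeas y')) (measure_ne_top W _)
          rw [hWS, measure_univ] at hc
          simpa using hc
        exact ae_iff.mpr hcompl
      have hub : ∀ᵐ p ∂W, F p.1 - F p.2 ≤ 2 * L * dist y y' := by
        filter_upwards [hae] with p hp
        obtain ⟨hp1, hp2⟩ := hp
        haveI := hκp p.1
        haveI := hκp p.2
        calc F p.1 - F p.2 ≤ TVDist (κ p.1) (κ p.2) := le_tvdist _ _ hgm hgb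
          _ ≤ L * dist p.1 p.2 := hκlip _ _
          _ ≤ L * (2 * dist y y') := by
              exact mul_le_mul_of_nonneg_left (hzz' _ hp1 _ hp2) hL0
          _ = 2 * L * dist y y' := by ring
      calc ∫ p, (F p.1 - F p.2) ∂W ≤ ∫ _, 2 * L * dist y y' ∂W :=
            integral_mono_ae (hI1.sub hI2) (integrable_const _) hub
        _ = 2 * L * dist y y' := by simp
    -- assemble
    have hdle1 : ∀ a b : PtOn d ({k} : Finset (Fin K)), dist a b ≤ 1 := by
      intro a b
      rw [dist_pi_le_iff zero_le_one]
      intro j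
      rw [dist_pi_le_iff zero_le_one]
      intro i
      exact dist_I01_le_one _ _
    have hgoal : Wass (m1.map mid2) (m1'.map mid2) ≤ (2 * L + 1) * dist y y' := by
      calc Wass (m1.map mid2) (m1'.map mid2)
          ≤ TVDist (m1.map mid2) (m1'.map mid2) := wass_le_tvdist hdle1 _ _
        _ ≤ 2 * L * dist y y' := hTVle
        _ ≤ (2 * L + 1) * dist y y' := by nlinarith
    exact hgoal
end

section
/- Suppose G contains no colliders and let ν ∈ P(X). Then for every 1-Lipschitz function f : X → ℝ, ∫ f dν^{bA} = ∫ f^ν dν^M, where f^ν : M → ℝ is the cell-average of f with respect to the product of the marginals of ν: f^ν(x) = (1/(⊗_{k=1}^K ν_k)(c(x))) ∫_{c(x)} f d(⊗_{k=1}^K ν_k), with the convention f^ν(x) = 0 when (⊗_{k=1}^K ν_k)(c(x)) = 0. -/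
open MeasureTheory Finset
open scoped ENNReal NNReal

noncomputable section
namespace S16
open MeasureTheory Finset
open scoped ENNReal Classical

/-! ### Dyadic cell arithmetic -/

lemma cIdx_lt_pow (η : ℕ) (t : I01) : cIdx η t < 2 ^ η := by
  have h1 : (1 : ℕ) ≤ 2 ^ η := Nat.one_le_two_pow
  have : cIdx η t ≤ 2 ^ η - 1 := min_le_right _ _
  omega

/-- midpoint of the `n`-th dyadic cell (`n < 2^η`). -/
def midOf (η : ℕ) (n : ℕ) : I01 :=
  ⟨((min n (2 ^ η - 1) : ℕ) + 1 / 2) / 2 ^ η, by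
    constructor
    · positivity
    · rw [div_le_one (by positivity)]
      have h1 : (1 : ℕ) ≤ 2 ^ η := Nat.one_le_two_pow
      have h : (min n (2 ^ η - 1) : ℕ) ≤ 2 ^ η - 1 := min_le_right _ _
      have h' : ((min n (2 ^ η - 1) : ℕ) : ℝ) ≤ ((2 ^ η - 1 : ℕ) : ℝ) := by exact_mod_cast h
      have h'' : ((2 ^ η - 1 : ℕ) : ℝ) = 2 ^ η - 1 := by
        rw [Nat.cast_sub h1]; push_cast; ring
      rw [h''] at h'; linarith⟩

lemma midOf_coe (η : ℕ) {n : ℕ} (hn : n < 2 ^ η) :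
    (midOf η n : ℝ) = (n + 1 / 2) / 2 ^ η := by
  have : min n (2 ^ η - 1) = n := min_eq_left (by omega)
  simp only [midOf, this]

lemma cIdx_midOf (η : ℕ) {n : ℕ} (hn : n < 2 ^ η) : cIdx η (midOf η n) = n := by
  have hpow : (0:ℝ) < 2 ^ η := by positivity
  have hcoe : (midOf η n : ℝ) * 2 ^ η = n + 1 / 2 := by
    rw [midOf_coe η hn]; field_simp
  have hfl : ⌊(midOf η n : ℝ) * 2 ^ η⌋₊ = n := by
    rw [hcoe]
    rw [Nat.floor_eq_iff (by positivity)]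
    refine ⟨by linarith, by push_cast; linarith⟩
  unfold cIdx
  rw [hfl]
  omega

lemma cMid_eq_midOf (η : ℕ) (t : I01) : cMid η t = midOf η (cIdx η t) := by
  have h : min (cIdx η t) (2 ^ η - 1) = cIdx η t :=
    min_eq_left (by have := cIdx_lt_pow η t; omega)
  apply Subtype.ext
  simp only [cMid, midOf, h]

lemma measurable_cIdx (η : ℕ) : Measurable (cIdx η) := by
  have h1 : Measurable fun t : I01 => (t : ℝ) * 2 ^ η :=
    measurable_subtype_coe.mul measurable_const
  have h2 : Measurable fun t : I01 => ⌊(t : ℝ) * 2 ^ η⌋₊ := Nat.measurable_floor.comp h1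
  exact (Measurable.of_discrete (f := fun m : ℕ => min m (2 ^ η - 1))).comp h2

/-- a measurable function into a finite type together with a function on it gives a
measurable composite. -/
lemma measurable_of_fibers {α X ι : Type*} [MeasurableSpace α] [MeasurableSpace X] [Fintype ι]
    (h : α → ι) (hh : ∀ c : ι, MeasurableSet {a | h a = c}) (g : ι → X) :
    Measurable fun a => g (h a) := by
  intro S _
  have : (fun a => g (h a)) ⁻¹' S = ⋃ c ∈ Finset.univ.filter (fun c : ι => g c ∈ S),
      {a | h a = c} := by
    ext a
    simp only [Set.mem_preimage, Set.mem_iUnion, Finset.mem_filter, Finset.mem_univ, true_and,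
      Set.mem_setOf_eq]
    exact ⟨fun hgs => ⟨h a, hgs, rfl⟩, by rintro ⟨c, hc, rfl⟩; exact hc⟩
  rw [this]
  exact (Finset.univ.filter _).measurableSet_biUnion (fun c _ => hh c)

end S16
end
noncomputable section
namespace S16
open MeasureTheory Finset
open scoped ENNReal Classical

variable {K : ℕ}

/-! ### Cells -/

abbrev CellK (d : Fin K → ℕ) (η : ℕ) (k : Fin K) : Type := Fin (d k) → Fin (2 ^ η)

abbrev CellAll (d : Fin K → ℕ) (η : ℕ) : Type := ∀ k, CellK d η k

def cIdxF (η : ℕ) (t : I01) : Fin (2 ^ η) := ⟨cIdx η t, cIdx_lt_pow η t⟩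

def idxC (d : Fin K → ℕ) (η : ℕ) {k : Fin K} (v : Coord d k) : CellK d η k :=
  fun i => cIdxF η (v i)

def idxAll (d : Fin K → ℕ) (η : ℕ) (x : Pt d) : CellAll d η := fun k => idxC d η (x k)

def cellCo (d : Fin K → ℕ) (η : ℕ) {k : Fin K} (c : CellK d η k) : Set (Coord d k) :=
  {v | idxC d η v = c}

def cellSet (d : Fin K → ℕ) (η : ℕ) (c : CellAll d η) : Set (Pt d) :=
  {x | idxAll d η x = c}

def halfC (d : Fin K → ℕ) (k : Fin K) : Coord d k := fun _ => half

def D0 (d : Fin K → ℕ) (η : ℕ) (k : Fin K) : CellK d η k := idxC d η (halfC d k)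

def repPt (d : Fin K → ℕ) (η : ℕ) (c : CellAll d η) : Pt d := fun k i => midOf η (c k i)

lemma idxC_eq_iff {d : Fin K → ℕ} {η : ℕ} {k : Fin K} (v : Coord d k) (c : CellK d η k) :
    idxC d η v = c ↔ ∀ i, cIdx η (v i) = (c i : ℕ) := by
  constructor
  · intro h i; rw [← h]; rfl
  · intro h; funext i; exact Fin.ext (h i)

lemma idxC_midOf {d : Fin K → ℕ} {η : ℕ} {k : Fin K} (c : CellK d η k) :
    idxC d η (fun i => midOf η ((c i : ℕ))) = c := by
  rw [idxC_eq_iff]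
  intro i
  exact cIdx_midOf η (c i).isLt

lemma idxAll_repPt (d : Fin K → ℕ) (η : ℕ) (c : CellAll d η) :
    idxAll d η (repPt d η c) = c := by
  funext k
  exact idxC_midOf (c k)

lemma measurableSet_cellCo (d : Fin K → ℕ) (η : ℕ) {k : Fin K} (c : CellK d η k) :
    MeasurableSet (cellCo d η c) := by
  have : cellCo d η c = ⋂ i, (fun v : Coord d k => v i) ⁻¹' (cIdx η ⁻¹' {(c i : ℕ)}) := by
    ext v
    simp only [cellCo, Set.mem_setOf_eq, idxC_eq_iff, Set.mem_iInter, Set.mem_preimage,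
      Set.mem_singleton_iff]
  rw [this]
  exact MeasurableSet.iInter fun i =>
    (measurable_pi_apply i) ((measurable_cIdx η) (MeasurableSet.singleton _))

lemma cellSet_eq_pi (d : Fin K → ℕ) (η : ℕ) (c : CellAll d η) :
    cellSet d η c = Set.pi Set.univ (fun k => cellCo d η (c k)) := by
  ext x
  simp only [cellSet, Set.mem_setOf_eq, Set.mem_pi, Set.mem_univ, true_imp_iff]
  constructor
  · intro h k; rw [← h]; rfl
  · intro h; funext k; exact h k

lemma measurableSet_cellSet (d : Fin K → ℕ) (η : ℕ) (c : CellAll d η) :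
    MeasurableSet (cellSet d η c) := by
  rw [cellSet_eq_pi]
  exact MeasurableSet.univ_pi fun k => measurableSet_cellCo d η (c k)

lemma measurable_of_cell_fibers {d : Fin K → ℕ} {η : ℕ} {X : Type*} [MeasurableSpace X]
    (g : CellAll d η → X) : Measurable fun x : Pt d => g (idxAll d η x) :=
  measurable_of_fibers (idxAll d η) (fun c => measurableSet_cellSet d η c) g

/-! ### Conditioned node marginals -/

def margK (d : Fin K → ℕ) (ν : Measure (Pt d)) (k : Fin K) : Measure (Coord d k) :=
  ν.map fun x => x k

def mNode (d : Fin K → ℕ) (η : ℕ) (ν : Measure (Pt d)) (k : Fin K) (c : CellK d η k) :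
    Measure (Coord d k) :=
  condOn (margK d ν k) (cellCo d η c) (fun i => midOf η ((c i : ℕ)))

lemma condOn_prob {α : Type*} [MeasurableSpace α] (m : Measure α) [IsFiniteMeasure m]
    (s : Set α) (x₀ : α) (hs : MeasurableSet s) : IsProbabilityMeasure (condOn m s x₀) := by
  unfold condOn
  split_ifs with h
  · infer_instance
  · constructor
    rw [Measure.smul_apply, Measure.restrict_apply_univ, smul_eq_mul]
    exact ENNReal.inv_mul_cancel h (measure_ne_top m s)

lemma condOn_apply_self {α : Type*} [MeasurableSpace α] (m : Measure α) [IsFiniteMeasure m]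
    {s : Set α} {x₀ : α} (hs : MeasurableSet s) (hx : x₀ ∈ s) : condOn m s x₀ s = 1 := by
  unfold condOn
  split_ifs with h
  · rw [Measure.dirac_apply' _ hs]
    simp [hx]
  · rw [Measure.smul_apply, Measure.restrict_apply hs, Set.inter_self, smul_eq_mul]
    exact ENNReal.inv_mul_cancel h (measure_ne_top m s)

variable {d : Fin K → ℕ} {η : ℕ} {ν : Measure (Pt d)}

lemma margK_prob (hν : IsProbabilityMeasure ν) (k : Fin K) :
    IsProbabilityMeasure (margK d ν k) :=
  Measure.isProbabilityMeasure_map (measurable_pi_apply k).aemeasurable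

lemma mNode_prob (hν : IsProbabilityMeasure ν) (k : Fin K) (c : CellK d η k) :
    IsProbabilityMeasure (mNode d η ν k c) := by
  haveI := margK_prob (d := d) hν k
  exact condOn_prob _ _ _ (measurableSet_cellCo d η c)

lemma mNode_cell (hν : IsProbabilityMeasure ν) (k : Fin K) (c : CellK d η k) :
    mNode d η ν k c (cellCo d η c) = 1 := by
  haveI := margK_prob (d := d) hν k
  exact condOn_apply_self _ (measurableSet_cellCo d η c) (idxC_midOf c)

end S16
end
noncomputable section
namespace S16
open MeasureTheory Finset
open scoped ENNReal Classical

variable {α β γ : Type*} [MeasurableSpace α] [MeasurableSpace β] [MeasurableSpace γ]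

/-! ### Generic measure lemmas -/

lemma condOn_map (e : α ≃ᵐ β) (μ : Measure α) {S : Set β} (hS : MeasurableSet S) (x₀ : α) :
    (condOn μ (e ⁻¹' S) x₀).map e = condOn (μ.map e) S (e x₀) := by
  unfold condOn
  rw [Measure.map_apply e.measurable hS]
  split_ifs with h
  · exact Measure.map_dirac' e.measurable x₀
  · rw [Measure.map_smul, Measure.restrict_map e.measurable hS]

lemma map_bind (m : Measure α) (g : α → Measure β) (hg : Measurable g) {h : β → γ}
    (hh : Measurable h) : (m.bind g).map h = m.bind fun a => (g a).map h := by
  ext s hs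
  rw [Measure.map_apply hh hs, Measure.bind_apply (hh hs) hg.aemeasurable]
  rw [show (fun a => (g a).map h) = (fun μ : Measure β => μ.map h) ∘ g from rfl]
  rw [Measure.bind_apply hs ((Measure.measurable_map h hh).comp hg).aemeasurable]
  exact lintegral_congr fun a => (Measure.map_apply hh hs).symm

lemma bind_piecewise {ι : Type*} [Fintype ι] (m : Measure α) (h : α → ι)
    (hh : ∀ c : ι, MeasurableSet {a | h a = c}) (g : ι → Measure β) :
    m.bind (fun a => g (h a)) = ∑ c : ι, m {a | h a = c} • g c := by
  ext s hs
  rw [Measure.bind_apply hs (measurable_of_fibers h hh g).aemeasurable]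
  have heq : ∀ a, g (h a) s =
      ∑ c : ι, Set.indicator {a' | h a' = c} (fun _ => g c s) a := by
    intro a
    rw [Finset.sum_eq_single (h a)]
    · simp [Set.indicator_of_mem, Set.mem_setOf_eq]
    · intro c _ hc
      apply Set.indicator_of_notMem
      simp only [Set.mem_setOf_eq]
      exact fun hac => hc (hac ▸ rfl)
    · intro hmem; exact absurd (Finset.mem_univ _) hmem
  rw [lintegral_congr heq, lintegral_finset_sum _ (fun c _ =>
    (measurable_const.indicator (hh c)))]
  rw [Measure.finset_sum_apply]
  congr 1
  funext c
  rw [lintegral_indicator (hh c), setLIntegral_const, Measure.smul_apply, smul_eq_mul, mul_comm]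

lemma bind_finsum_smul {ι : Type*} [Fintype ι] (w : ι → ℝ≥0∞) (μ : ι → Measure α)
    (f : α → Measure β) (hf : Measurable f) :
    (∑ i : ι, w i • μ i).bind f = ∑ i : ι, w i • (μ i).bind f := by
  ext s hs
  rw [Measure.bind_apply hs hf.aemeasurable, lintegral_finset_sum_measure, Measure.finset_sum_apply]
  congr 1
  funext i
  rw [lintegral_smul_measure, Measure.smul_apply, smul_eq_mul, Measure.bind_apply hs hf.aemeasurable, smul_eq_mul]

lemma map_finsum_smul {ι : Type*} [Fintype ι] (w : ι → ℝ≥0∞) (μ : ι → Measure α)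
    {g : α → β} (hg : Measurable g) :
    (∑ i : ι, w i • μ i).map g = ∑ i : ι, w i • (μ i).map g := by
  ext s hs
  rw [Measure.map_apply hg hs, Measure.finset_sum_apply, Measure.finset_sum_apply]
  congr 1
  funext i
  rw [Measure.smul_apply, Measure.smul_apply, Measure.map_apply hg hs]

lemma bind_congr_ae (m : Measure α) {f g : α → Measure β} (hf : Measurable f)
    (hg : Measurable g) (h : ∀ᵐ a ∂m, f a = g a) : m.bind f = m.bind g := by
  ext s hs
  rw [Measure.bind_apply hs hf.aemeasurable, Measure.bind_apply hs hg.aemeasurable]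
  exact lintegral_congr_ae (h.mono fun a ha => by simp only [ha])

/-- pushforward of a probability measure by a map a.e. constant on a full set is a Dirac. -/
lemma map_const_on_full (m : Measure α) [IsProbabilityMeasure m] {A : Set α}
    (hA : MeasurableSet A) (hfull : m A = 1) {g : α → β} (hg : Measurable g) {b : β}
    (hconst : ∀ a ∈ A, g a = b) : m.map g = Measure.dirac b := by
  ext s hs
  rw [Measure.map_apply hg hs, Measure.dirac_apply' _ hs]
  have hcompl : m Aᶜ = 0 := by
    rw [measure_compl hA (measure_ne_top m A), hfull, measure_univ]; simp
  by_cases hb : b ∈ s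
  · have : A ⊆ g ⁻¹' s := fun a ha => by
      simp only [Set.mem_preimage, hconst a ha]; exact hb
    have h1 : m (g ⁻¹' s) = 1 := le_antisymm prob_le_one (hfull ▸ measure_mono this)
    simp [h1, hb]
  · have : g ⁻¹' s ⊆ Aᶜ := by
      intro a ha
      by_contra hc
      rw [Set.notMem_compl_iff] at hc
      exact hb (hconst a hc ▸ ha)
    have h0 : m (g ⁻¹' s) = 0 := le_antisymm (hcompl ▸ measure_mono this) (by simp)
    simp [h0, hb]

end S16
end
noncomputable section
namespace S16
open MeasureTheory Finset
open scoped ENNReal Classical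

/-! ### Product measure lemmas -/

variable {ι : Type*} [Fintype ι] {π : ι → Type*} [∀ i, MeasurableSpace (π i)]

lemma pi_dirac (x : ∀ i, π i) :
    Measure.pi (fun i => Measure.dirac (x i)) = Measure.dirac x := by
  refine Measure.pi_eq fun B hB => ?_
  rw [Measure.dirac_apply' _ (MeasurableSet.univ_pi hB)]
  by_cases hx : x ∈ Set.pi Set.univ B
  · simp only [Set.indicator_of_mem hx, Pi.one_apply]
    symm
    apply Finset.prod_eq_one
    intro i _
    rw [Measure.dirac_apply' _ (hB i), Set.indicator_of_mem (hx i (Set.mem_univ i)), Pi.one_apply]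
  · rw [Set.indicator_of_notMem hx]
    rw [Set.mem_pi] at hx
    push_neg at hx
    obtain ⟨i, _, hi⟩ := hx
    refine (Finset.prod_eq_zero (Finset.mem_univ i) ?_).symm
    rw [Measure.dirac_apply' _ (hB i), Set.indicator_of_notMem hi]

lemma sigmaFinite_smul {α : Type*} [MeasurableSpace α] (a : ℝ≥0∞) (ha : a ≠ ∞)
    (μ : Measure α) [IsFiniteMeasure μ] : SigmaFinite (a • μ) := by
  haveI : IsFiniteMeasure (a • μ) := by
    constructor
    rw [Measure.smul_apply, smul_eq_mul]
    exact ENNReal.mul_lt_top ha.lt_top (measure_lt_top μ _)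
  infer_instance

lemma pi_smul (a : ι → ℝ≥0∞) (ha : ∀ i, a i ≠ ∞) (μ : ∀ i, Measure (π i))
    [∀ i, IsFiniteMeasure (μ i)] :
    Measure.pi (fun i => a i • μ i) = (∏ i, a i) • Measure.pi μ := by
  haveI : ∀ i, SigmaFinite (a i • μ i) := fun i => sigmaFinite_smul _ (ha i) _
  refine Measure.pi_eq fun B hB => ?_
  rw [Measure.smul_apply, Measure.pi_pi, smul_eq_mul, ← Finset.prod_mul_distrib]
  exact Finset.prod_congr rfl fun i _ => rfl

lemma pi_restrict (μ : ∀ i, Measure (π i)) [∀ i, IsFiniteMeasure (μ i)]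
    (S : ∀ i, Set (π i)) (hS : ∀ i, MeasurableSet (S i)) :
    Measure.pi (fun i => (μ i).restrict (S i)) =
      (Measure.pi μ).restrict (Set.pi Set.univ S) := by
  refine Measure.pi_eq fun B hB => ?_
  rw [Measure.restrict_apply (MeasurableSet.univ_pi hB), ← Set.pi_inter_distrib,
    Measure.pi_pi]
  exact Finset.prod_congr rfl fun i _ => (Measure.restrict_apply (hB i)).symm

variable {K : ℕ} {d : Fin K → ℕ}

lemma measurable_map_update (k₀ : Fin K) (σ : Measure (Coord d k₀)) [SFinite σ] :
    Measurable fun x : Pt d => σ.map (Function.update x k₀) := by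
  rw [Measure.measurable_measure]
  intro s hs
  have hup : Measurable fun p : Pt d × Coord d k₀ => Function.update p.1 k₀ p.2 :=
    measurable_update'
  have : ∀ x : Pt d, σ.map (Function.update x k₀) s =
      σ (Prod.mk x ⁻¹' ((fun p : Pt d × Coord d k₀ => Function.update p.1 k₀ p.2) ⁻¹' s)) := by
    intro x
    rw [Measure.map_apply (measurable_update x) hs]
    rfl
  simp only [this]
  exact measurable_measure_prodMk_left (hup hs)

lemma pi_bind_update (μs : ∀ k, Measure (Coord d k)) [∀ k, IsProbabilityMeasure (μs k)]
    (k₀ : Fin K) (σ : Measure (Coord d k₀)) [IsProbabilityMeasure σ]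
    (μs' : ∀ k, Measure (Coord d k)) [∀ k, IsProbabilityMeasure (μs' k)]
    (h0 : μs' k₀ = σ) (h1 : ∀ k, k ≠ k₀ → μs' k = μs k) :
    (Measure.pi μs).bind (fun x => σ.map (Function.update x k₀)) = Measure.pi μs' := by
  refine (Measure.pi_eq fun B hB => ?_).symm
  rw [Measure.bind_apply (MeasurableSet.univ_pi hB) (measurable_map_update k₀ σ).aemeasurable]
  have hpoint : ∀ x : Pt d, σ.map (Function.update x k₀) (Set.pi Set.univ B) =
      Set.indicator (Set.pi Set.univ (fun j => if j = k₀ then Set.univ else B j))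
        (fun _ => σ (B k₀)) x := by
    intro x
    rw [Measure.map_apply (measurable_update x) (MeasurableSet.univ_pi hB)]
    by_cases hx : x ∈ Set.pi Set.univ (fun j => if j = k₀ then Set.univ else B j)
    · rw [Set.indicator_of_mem hx]
      congr 1
      ext v
      simp only [Set.mem_preimage, Set.mem_pi, Set.mem_univ, true_imp_iff]
      constructor
      · intro h
        have := h k₀
        rwa [Function.update_self] at this
      · intro hv j
        by_cases hj : j = k₀
        · subst hj; rwa [Function.update_self]
        · rw [Function.update_of_ne hj]
          have := hx j (Set.mem_univ j)
          simpa [hj] using this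
    · rw [Set.indicator_of_notMem hx]
      have : ((fun v => Function.update x k₀ v) ⁻¹' Set.pi Set.univ B) = (∅ : Set (Coord d k₀)) := by
        ext v
        simp only [Set.mem_preimage, Set.mem_pi, Set.mem_univ, true_imp_iff,
          Set.mem_empty_iff_false, iff_false]
        intro h
        apply hx
        intro j _
        by_cases hj : j = k₀
        · subst hj; simp
        · have := h j
          rw [Function.update_of_ne hj] at this
          simpa [hj] using this
      rw [this]; simp
  rw [lintegral_congr hpoint,
    lintegral_indicator (MeasurableSet.univ_pi fun j => by
      by_cases hj : j = k₀
      · subst hj; simp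
      · rw [if_neg hj]; exact hB j),
    setLIntegral_const, Measure.pi_pi]
  -- now pure product bookkeeping
  have h2 : ∏ i, μs i (if i = k₀ then Set.univ else B i)
      = ∏ i ∈ Finset.univ.erase k₀, μs i (B i) := by
    rw [← Finset.mul_prod_erase Finset.univ _ (Finset.mem_univ k₀), if_pos rfl, measure_univ,
      one_mul]
    exact Finset.prod_congr rfl fun j hj => by rw [if_neg (Finset.mem_erase.mp hj).1]
  rw [h2, ← Finset.mul_prod_erase Finset.univ (fun j => μs' j (B j)) (Finset.mem_univ k₀), h0]
  congr 1
  exact (Finset.prod_congr rfl fun j hj => by rw [h1 j (Finset.mem_erase.mp hj).1]).symm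

end S16
end
noncomputable section
namespace S16
open MeasureTheory Finset
open scoped ENNReal Classical

variable {K : ℕ}

instance uniqueSingleton (k : Fin K) : Unique ↑({k} : Finset (Fin K)) where
  default := ⟨k, Finset.mem_singleton_self k⟩
  uniq := fun j => Subtype.ext (Finset.mem_singleton.mp j.2)

def eqK (d : Fin K → ℕ) (k : Fin K) : PtOn d ({k} : Finset (Fin K)) ≃ᵐ Coord d k :=
  MeasurableEquiv.piUnique (fun j : ↑({k} : Finset (Fin K)) => Coord d j.1)

variable {d : Fin K → ℕ} {η : ℕ}

lemma eqK_apply (k : Fin K) (z : PtOn d ({k} : Finset (Fin K))) :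
    eqK d k z = z ⟨k, Finset.mem_singleton_self k⟩ := rfl

def idxS (d : Fin K → ℕ) (η : ℕ) (k : Fin K) (z : PtOn d ({k} : Finset (Fin K))) :
    CellK d η k := idxC d η (eqK d k z)

lemma measurable_projOn (d : Fin K → ℕ) (I : Finset (Fin K)) : Measurable (projOn d I) :=
  measurable_pi_lambda _ (fun j => measurable_pi_apply j.1)

def jointCyl (d : Fin K → ℕ) (η : ℕ) (S : Finset (Fin K)) (c : CellAll d η) : Set (Pt d) :=
  {x | ∀ j ∈ S, idxC d η (x j) = c j}

lemma measurableSet_jointCyl (S : Finset (Fin K)) (c : CellAll d η) :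
    MeasurableSet (jointCyl d η S c) := by
  have : jointCyl d η S c = ⋂ j ∈ S, (fun x : Pt d => x j) ⁻¹' (cellCo d η (c j)) := by
    ext x
    simp only [jointCyl, Set.mem_setOf_eq, Set.mem_iInter, Set.mem_preimage, cellCo]
  rw [this]
  exact MeasurableSet.biInter (Set.to_countable _)
    (fun j _ => (measurable_pi_apply j) (measurableSet_cellCo d η (c j)))

lemma preimage_cellOn_eq (pa : Fin K → Finset (Fin K)) (k : Fin K) (x₀ : Pt d) :
    projOn d (pa k) ⁻¹' cellOn d η (pa k) (projOn d (pa k) x₀) =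
      jointCyl d η (pa k) (idxAll d η x₀) := by
  ext y
  simp only [cellOn, projOn, Set.mem_preimage, Set.mem_setOf_eq, jointCyl]
  constructor
  · intro h j hj
    rw [idxC_eq_iff]
    exact fun i => h ⟨j, hj⟩ i
  · intro h j i
    have := h j.1 j.2
    rw [idxC_eq_iff] at this
    exact this i

def ePt (d : Fin K → ℕ) (pa : Fin K → Finset (Fin K)) (η : ℕ) (k : Fin K) (c : CellAll d η) :
    Pt d :=
  fun j => if j ∈ pa k then (fun i => midOf η ((c j i : ℕ))) else fun _ => half

lemma extendPt_eq (pa : Fin K → Finset (Fin K)) (k : Fin K) (x₀ : Pt d) :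
    extendPt d pa η k (projOn d (pa k) x₀) = ePt d pa η k (idxAll d η x₀) := by
  funext j
  unfold extendPt ePt
  by_cases hj : j ∈ pa k
  · rw [dif_pos hj, if_pos hj]
    funext i
    exact cMid_eq_midOf η (x₀ j i)
  · rw [dif_neg hj, if_neg hj]

lemma cellOn_singleton (k : Fin K) (z : PtOn d ({k} : Finset (Fin K))) :
    cellOn d η ({k} : Finset (Fin K)) z =
      {y | idxS d η k y = idxS d η k z} := by
  ext y
  simp only [cellOn, Set.mem_setOf_eq]
  constructor
  · intro h
    funext i
    exact Fin.ext (h default i)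
  · intro h j i
    have hj : j = default := Unique.uniq _ j
    subst hj
    exact congrArg Fin.val (congrFun h i)

lemma midPtOn_singleton (k : Fin K) (z : PtOn d ({k} : Finset (Fin K))) :
    midPtOn d η ({k} : Finset (Fin K)) z =
      (eqK d k).symm (fun i => midOf η ((idxS d η k z i : ℕ))) := by
  apply (eqK d k).toEquiv.injective
  show eqK d k (midPtOn d η _ z) = eqK d k ((eqK d k).symm _)
  rw [MeasurableEquiv.apply_symm_apply]
  funext i
  exact cMid_eq_midOf η (z default i)

def wK (d : Fin K → ℕ) (pa : Fin K → Finset (Fin K)) (η : ℕ) (ν : Measure (Pt d)) (k : Fin K)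
    (c : CellAll d η) (ck : CellK d η k) : ℝ≥0∞ :=
  condOn ν (jointCyl d η (pa k) c) (ePt d pa η k c) ((fun x : Pt d => x k) ⁻¹' cellCo d η ck)

def KC (d : Fin K → ℕ) (pa : Fin K → Finset (Fin K)) (η : ℕ) (ν : Measure (Pt d)) (k : Fin K)
    (c : CellAll d η) : Measure (Coord d k) :=
  ∑ ck : CellK d η k, wK d pa η ν k c ck • mNode d η ν k ck

variable {pa : Fin K → Finset (Fin K)} {ν : Measure (Pt d)}

lemma map_projK_eqK (k' : Fin K) :
    (ν.map (projOn d ({k'} : Finset (Fin K)))).map (eqK d k') = margK d ν k' := by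
  rw [Measure.map_map (eqK d k').measurable (measurable_projOn d _)]
  rfl

theorem kerBA_eqK (k : Fin K) (x₀ : Pt d) :
    (kerBA d pa η ν k (projOn d (pa k) x₀)).map (eqK d k) =
      KC d pa η ν k (idxAll d η x₀) := by
  unfold kerBA
  rw [preimage_cellOn_eq pa k x₀, extendPt_eq pa k x₀]
  set m1 : Measure (Pt d) :=
    condOn ν (jointCyl d η (pa k) (idxAll d η x₀)) (ePt d pa η k (idxAll d η x₀)) with hm1
  set νk : Measure (PtOn d ({k} : Finset (Fin K))) := ν.map (projOn d {k}) with hνk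
  -- the inner kernel factors through the cell index
  set Gm : CellK d η k → Measure (PtOn d ({k} : Finset (Fin K))) := fun ck =>
    condOn νk ((eqK d k) ⁻¹' (cellCo d η ck))
      ((eqK d k).symm (fun i => midOf η ((ck i : ℕ)))) with hGm
  have hfib : ∀ ck : CellK d η k,
      MeasurableSet {z : PtOn d ({k} : Finset (Fin K)) | idxS d η k z = ck} := fun ck =>
    (eqK d k).measurable (measurableSet_cellCo d η ck)
  have hg : (fun z => condOn νk (cellOn d η ({k} : Finset (Fin K)) z)
      (midPtOn d η ({k} : Finset (Fin K)) z)) = fun z => Gm (idxS d η k z) := by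
    funext z
    rw [cellOn_singleton k z, midPtOn_singleton k z]
    rfl
  rw [hg]
  have hGmmeas : Measurable fun z => Gm (idxS d η k z) :=
    measurable_of_fibers (idxS d η k) hfib Gm
  rw [map_bind _ _ hGmmeas (eqK d k).measurable]
  have hGmap : ∀ ck, (Gm ck).map (eqK d k) = mNode d η ν k ck := by
    intro ck
    rw [hGm]
    rw [condOn_map (eqK d k) νk (measurableSet_cellCo d η ck)]
    rw [MeasurableEquiv.apply_symm_apply]
    rw [hνk, map_projK_eqK k]
    rfl
  have : (fun z => ((Gm (idxS d η k z)).map (eqK d k))) =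
      fun z => mNode d η ν k (idxS d η k z) := by
    funext z; exact hGmap _
  rw [this]
  rw [bind_piecewise _ (idxS d η k) hfib (mNode d η ν k)]
  unfold KC
  congr 1
  funext ck
  congr 1
  rw [Measure.map_apply (measurable_projOn d _) (hfib ck)]
  rfl

end S16
end
noncomputable section
namespace S16
open MeasureTheory Finset
open scoped ENNReal Classical

variable {α β : Type*} [MeasurableSpace α] [MeasurableSpace β]

lemma ae_of_full {m : Measure α} {A : Set α} (hfull : m Aᶜ = 0) {p : α → Prop}
    (h : ∀ a ∈ A, p a) : ∀ᵐ a ∂m, p a := by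
  rw [MeasureTheory.ae_iff]
  refine measure_mono_null (fun a ha => ?_) hfull
  simp only [Set.mem_setOf_eq] at ha
  exact fun hA => ha (h a hA)

lemma bind_kernel_sum {ι : Type*} [Fintype ι] (m : Measure α) (w : ι → ℝ≥0∞)
    (g : ι → α → Measure β) (hg : ∀ i, Measurable (g i)) :
    m.bind (fun a => ∑ i : ι, w i • g i a) = ∑ i : ι, w i • m.bind (g i) := by
  have hmeas : Measurable (fun a => ∑ i : ι, w i • g i a) := by
    rw [Measure.measurable_measure]
    intro t ht
    simp only [Measure.finset_sum_apply, Measure.smul_apply, smul_eq_mul]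
    exact Finset.measurable_sum _ fun i _ => ((Measure.measurable_coe ht).comp (hg i)).const_mul _
  ext s hs
  rw [Measure.bind_apply hs hmeas.aemeasurable]
  have : ∀ a, (∑ i : ι, w i • g i a) s = ∑ i : ι, w i * g i a s := by
    intro a
    simp only [Measure.finset_sum_apply, Measure.smul_apply, smul_eq_mul]
  rw [lintegral_congr this,
    lintegral_finset_sum Finset.univ (f := fun i a => w i * (g i a) s)
      (fun i _ => Measurable.const_mul ((Measure.measurable_coe hs).comp (hg i)) (w i))]
  rw [Measure.finset_sum_apply]
  congr 1
  funext i
  rw [Measure.smul_apply, smul_eq_mul,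
    lintegral_const_mul (w i)
      (show Measurable fun a => (g i a) s from (Measure.measurable_coe hs).comp (hg i)),
    Measure.bind_apply hs (hg i).aemeasurable]

variable {K : ℕ} {d : Fin K → ℕ} {η : ℕ} {pa : Fin K → Finset (Fin K)} {ν : Measure (Pt d)}

lemma wK_le_one (hν : IsProbabilityMeasure ν) (k : Fin K) (c : CellAll d η)
    (ck : CellK d η k) : wK d pa η ν k c ck ≤ 1 := by
  haveI := condOn_prob ν (jointCyl d η (pa k) c) (ePt d pa η k c)
    (measurableSet_jointCyl (pa k) c)
  exact prob_le_one

lemma wK_parents {k : Fin K} {c c' : CellAll d η} (ck : CellK d η k)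
    (hc : ∀ j ∈ pa k, c j = c' j) : wK d pa η ν k c ck = wK d pa η ν k c' ck := by
  have h1 : jointCyl d η (pa k) c = jointCyl d η (pa k) c' := by
    ext x
    simp only [jointCyl, Set.mem_setOf_eq]
    exact ⟨fun h j hj => (hc j hj) ▸ h j hj, fun h j hj => (hc j hj).symm ▸ h j hj⟩
  have h2 : ePt d pa η k c = ePt d pa η k c' := by
    funext j
    unfold ePt
    by_cases hj : j ∈ pa k
    · rw [if_pos hj, if_pos hj, hc j hj]
    · rw [if_neg hj, if_neg hj]
  rw [wK, wK, h1, h2]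

lemma KC_finite (hν : IsProbabilityMeasure ν) (k : Fin K) (c : CellAll d η) :
    IsFiniteMeasure (KC d pa η ν k c) := by
  constructor
  rw [KC, Measure.finset_sum_apply]
  refine (Finset.sum_le_sum (fun ck _ => ?_)).trans_lt
    (lt_of_le_of_lt (Finset.sum_le_card_nsmul _ _ 1 (fun x _ => le_rfl)) ?_)
  · haveI := mNode_prob (η := η) hν k ck
    rw [Measure.smul_apply, smul_eq_mul]
    calc wK d pa η ν k c ck * mNode d η ν k ck Set.univ ≤ 1 * 1 := by
          exact mul_le_mul' (wK_le_one hν k c ck) prob_le_one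
      _ = 1 := by rw [mul_one]
  · rw [nsmul_eq_mul, mul_one]
    exact ENNReal.natCast_lt_top _

def Fker (d : Fin K → ℕ) (pa : Fin K → Finset (Fin K)) (η : ℕ) (ν : Measure (Pt d))
    (k₀ : Fin K) : Pt d → Measure (Pt d) := fun x =>
  (KC d pa η ν k₀ (idxAll d η x)).map (fun v => Function.update x k₀ v)

lemma measurable_Fker (hν : IsProbabilityMeasure ν) (k₀ : Fin K) :
    Measurable (Fker d pa η ν k₀) := by
  haveI : ∀ c : CellAll d η, SFinite (KC d pa η ν k₀ c) := fun c => by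
    haveI := KC_finite (pa := pa) hν k₀ c; infer_instance
  rw [Measure.measurable_measure]
  intro s hs
  have hpt : ∀ x : Pt d, Fker d pa η ν k₀ x s = ∑ c : CellAll d η,
      Set.indicator (cellSet d η c)
        (fun x' => (KC d pa η ν k₀ c).map (fun v => Function.update x' k₀ v) s) x := by
    intro x
    have hzero : ∀ c ∈ (Finset.univ : Finset (CellAll d η)), c ≠ idxAll d η x →
        Set.indicator (cellSet d η c)
          (fun x' => (KC d pa η ν k₀ c).map (fun v => Function.update x' k₀ v) s) x = 0 := by
      intro c _ hc
      apply Set.indicator_of_notMem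
      intro hx
      exact hc (Eq.symm hx)
    rw [Finset.sum_eq_single_of_mem _ (Finset.mem_univ (idxAll d η x)) hzero,
      Set.indicator_of_mem (show x ∈ cellSet d η (idxAll d η x) from rfl)]
    rfl
  have hfun : (fun x : Pt d => Fker d pa η ν k₀ x s) = fun x => ∑ c : CellAll d η,
      Set.indicator (cellSet d η c)
        (fun x' => (KC d pa η ν k₀ c).map (fun v => Function.update x' k₀ v) s) x :=
    funext hpt
  rw [hfun]
  refine Finset.measurable_sum _ fun c _ => Measurable.indicator ?_ (measurableSet_cellSet d η c)
  exact (Measure.measurable_coe hs).comp (measurable_map_update k₀ (KC d pa η ν k₀ c))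

/-! ### The mixture representation of `chainM` -/

def PiFam (d : Fin K → ℕ) (η : ℕ) (ν : Measure (Pt d)) (n : ℕ) (c : CellAll d η)
    (k : Fin K) : Measure (Coord d k) :=
  if (k : ℕ) < n then mNode d η ν k (c k) else Measure.dirac (halfC d k)

def PiM (d : Fin K → ℕ) (η : ℕ) (ν : Measure (Pt d)) (n : ℕ) (c : CellAll d η) :
    Measure (Pt d) := Measure.pi (PiFam d η ν n c)

def W (d : Fin K → ℕ) (pa : Fin K → Finset (Fin K)) (η : ℕ) (ν : Measure (Pt d)) (n : ℕ)
    (c : CellAll d η) : ℝ≥0∞ :=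
  ∏ k : Fin K, if (k : ℕ) < n then wK d pa η ν k c (c k)
    else (if c k = D0 d η k then 1 else 0)

lemma PiFam_prob (hν : IsProbabilityMeasure ν) (n : ℕ) (c : CellAll d η) (k : Fin K) :
    IsProbabilityMeasure (PiFam d η ν n c k) := by
  rw [PiFam]
  split_ifs
  · exact mNode_prob hν k (c k)
  · infer_instance

lemma halfC_mem_D0 (k : Fin K) : halfC d k ∈ cellCo d η (D0 d η k) := rfl

lemma PiM_cellSet_one (hν : IsProbabilityMeasure ν) {n : ℕ} {c : CellAll d η}
    (hsupp : ∀ k : Fin K, n ≤ (k : ℕ) → c k = D0 d η k) :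
    PiM d η ν n c (cellSet d η c) = 1 := by
  haveI := fun k => PiFam_prob hν n c k
  rw [PiM, cellSet_eq_pi, Measure.pi_pi]
  refine Finset.prod_eq_one fun k _ => ?_
  rw [PiFam]
  split_ifs with h
  · exact mNode_cell hν k (c k)
  · rw [hsupp k (not_lt.mp h), Measure.dirac_apply' _ (measurableSet_cellCo d η _),
      Set.indicator_of_mem (halfC_mem_D0 k), Pi.one_apply]

end S16
end
noncomputable section
namespace S16
open MeasureTheory Finset
open scoped ENNReal Classical

variable {K : ℕ} {d : Fin K → ℕ} {η : ℕ} {pa : Fin K → Finset (Fin K)} {ν : Measure (Pt d)}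

def swapUpd (d : Fin K → ℕ) (η : ℕ) (k₀ : Fin K) :
    (CellAll d η × CellK d η k₀) ≃ (CellAll d η × CellK d η k₀) where
  toFun p := (Function.update p.1 k₀ p.2, p.1 k₀)
  invFun p := (Function.update p.1 k₀ p.2, p.1 k₀)
  left_inv p := by
    refine Prod.ext ?_ ?_
    · show Function.update (Function.update p.1 k₀ p.2) k₀ (p.1 k₀) = p.1
      rw [Function.update_idem, Function.update_eq_self]
    · show (Function.update p.1 k₀ p.2) k₀ = p.2
      rw [Function.update_self]
  right_inv p := by
    refine Prod.ext ?_ ?_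
    · show Function.update (Function.update p.1 k₀ p.2) k₀ (p.1 k₀) = p.1
      rw [Function.update_idem, Function.update_eq_self]
    · show (Function.update p.1 k₀ p.2) k₀ = p.2
      rw [Function.update_self]

theorem chainM_eq (hsort : SortedGraph pa) (hν : IsProbabilityMeasure ν) :
    ∀ n, n ≤ K → chainM d pa (kerBA d pa η ν) n =
      ∑ c : CellAll d η, W d pa η ν n c • PiM d η ν n c := by
  intro n
  induction n with
  | zero =>
    intro _
    have hW : ∀ c : CellAll d η, W d pa η ν 0 c = if c = D0 d η then 1 else 0 := by
      intro c
      by_cases hc : c = D0 d η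
      · subst hc
        rw [if_pos rfl, W]
        refine Finset.prod_eq_one fun k _ => ?_
        rw [if_neg (by omega), if_pos rfl]
      · rw [if_neg hc, W]
        obtain ⟨k, hk⟩ : ∃ k, c k ≠ D0 d η k := by
          by_contra h; push_neg at h; exact hc (funext h)
        refine Finset.prod_eq_zero (Finset.mem_univ k) ?_
        rw [if_neg (by omega), if_neg hk]
    have hzero : ∀ c ∈ (Finset.univ : Finset (CellAll d η)), c ≠ D0 d η →
        W d pa η ν 0 c • PiM d η ν 0 c = 0 := by
      intro c _ hc
      rw [hW c, if_neg hc, zero_smul]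
    rw [Finset.sum_eq_single_of_mem _ (Finset.mem_univ (D0 d η)) hzero,
      hW _, if_pos rfl, one_smul]
    have hPiM : PiM d η ν 0 (D0 d η) = Measure.dirac (basePt d) := by
      rw [PiM]
      have hfam : PiFam d η ν 0 (D0 d η) = fun k => Measure.dirac (basePt d k) := by
        funext k; rw [PiFam, if_neg (by omega)]; rfl
      rw [hfam, pi_dirac]
    rw [hPiM]
    rfl
  | succ n ih =>
    intro hn1
    have hnK : n < K := hn1
    have hsum := ih (le_of_lt hnK)
    set k₀ : Fin K := ⟨n, hnK⟩ with hk₀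
    have hk₀n : (k₀ : ℕ) = n := rfl
    have hfeq : (fun x => (kerBA d pa η ν k₀ (projOn d (pa k₀) x)).map
        (fun y => Function.update x k₀ (y ⟨k₀, Finset.mem_singleton_self _⟩)))
        = Fker d pa η ν k₀ := by
      funext x
      have h1 : (fun y : PtOn d ({k₀} : Finset (Fin K)) =>
          Function.update x k₀ (y ⟨k₀, Finset.mem_singleton_self _⟩)) =
          (fun v => Function.update x k₀ v) ∘ ⇑(eqK d k₀) := rfl
      rw [h1, ← Measure.map_map (measurable_update x) (eqK d k₀).measurable, kerBA_eqK k₀ x]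
      rfl
    have hstep : chainM d pa (kerBA d pa η ν) (n + 1)
        = (chainM d pa (kerBA d pa η ν) n).bind (Fker d pa η ν k₀) := by
      simp only [chainM, dif_pos hnK]
      rw [← hfeq]
    have hbindc : ∀ c : CellAll d η,
        W d pa η ν n c • (PiM d η ν n c).bind (Fker d pa η ν k₀)
          = ∑ ck : CellK d η k₀, (W d pa η ν n c * wK d pa η ν k₀ c ck) •
              PiM d η ν (n + 1) (Function.update c k₀ ck) := by
      intro c
      by_cases hsupp : ∀ k : Fin K, n ≤ (k : ℕ) → c k = D0 d η k
      · haveI hKCfin : IsFiniteMeasure (KC d pa η ν k₀ c) := KC_finite hν k₀ c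
        haveI : ∀ ck : CellK d η k₀, SFinite (mNode d η ν k₀ ck) := fun ck => by
          haveI := mNode_prob (η := η) hν k₀ ck; infer_instance
        have hF2meas : Measurable (fun x : Pt d =>
            (KC d pa η ν k₀ c).map (fun v => Function.update x k₀ v)) :=
          measurable_map_update k₀ (KC d pa η ν k₀ c)
        haveI : IsProbabilityMeasure (PiM d η ν n c) := by
          haveI := fun k => PiFam_prob hν n c k
          rw [PiM]; infer_instance
        have hae : ∀ᵐ x ∂(PiM d η ν n c), Fker d pa η ν k₀ x =
            (KC d pa η ν k₀ c).map (fun v => Function.update x k₀ v) := by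
          refine ae_of_full (A := cellSet d η c) ?_ (fun x hx => ?_)
          · rw [measure_compl (measurableSet_cellSet d η c) (measure_ne_top _ _),
              PiM_cellSet_one hν hsupp, measure_univ, tsub_self]
          · have hidx : idxAll d η x = c := hx
            rw [Fker, hidx]
        have h2 : (PiM d η ν n c).bind (Fker d pa η ν k₀)
            = (PiM d η ν n c).bind (fun x =>
                (KC d pa η ν k₀ c).map (fun v => Function.update x k₀ v)) :=
          bind_congr_ae _ (measurable_Fker hν k₀) hF2meas hae
        have h3 : (fun x : Pt d => (KC d pa η ν k₀ c).map (fun v => Function.update x k₀ v))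
            = fun x => ∑ ck : CellK d η k₀, wK d pa η ν k₀ c ck •
                (mNode d η ν k₀ ck).map (fun v => Function.update x k₀ v) := by
          funext x
          rw [KC, map_finsum_smul _ _ (measurable_update x)]
        have h5 : ∀ ck : CellK d η k₀,
            (PiM d η ν n c).bind (fun x =>
              (mNode d η ν k₀ ck).map (fun v => Function.update x k₀ v))
            = PiM d η ν (n + 1) (Function.update c k₀ ck) := by
          intro ck
          haveI := fun k => PiFam_prob hν n c k
          haveI := fun k => PiFam_prob hν (n + 1) (Function.update c k₀ ck) k
          haveI := mNode_prob (η := η) hν k₀ ck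
          have hres := pi_bind_update (PiFam d η ν n c) k₀ (mNode d η ν k₀ ck)
            (PiFam d η ν (n + 1) (Function.update c k₀ ck)) ?_ ?_
          · exact hres
          · rw [PiFam, if_pos (by omega : (k₀ : ℕ) < n + 1), Function.update_self]
          · intro k hk
            have hkn : (k : ℕ) ≠ n := fun h => hk (Fin.ext h)
            rw [PiFam, PiFam]
            by_cases hlt : (k : ℕ) < n
            · rw [if_pos hlt, if_pos (by omega), Function.update_of_ne hk]
            · rw [if_neg hlt, if_neg (by omega)]
        rw [h2, h3, bind_kernel_sum _ _ _ (fun ck => measurable_map_update k₀ _),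
          Finset.smul_sum]
        refine Finset.sum_congr rfl fun ck _ => ?_
        rw [h5 ck, smul_smul]
      · push_neg at hsupp
        obtain ⟨k, hkn, hck⟩ := hsupp
        have hW0 : W d pa η ν n c = 0 :=
          Finset.prod_eq_zero (Finset.mem_univ k) (by rw [if_neg (by omega), if_neg hck])
        rw [hW0, zero_smul]
        symm
        refine Finset.sum_eq_zero fun ck _ => ?_
        rw [zero_mul, zero_smul]
    have key : ∀ (c : CellAll d η) (ck : CellK d η k₀),
        (W d pa η ν n c * wK d pa η ν k₀ c ck) • PiM d η ν (n + 1) (Function.update c k₀ ck)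
          = if c k₀ = D0 d η k₀ then
              W d pa η ν (n + 1) (Function.update c k₀ ck) •
                PiM d η ν (n + 1) (Function.update c k₀ ck)
            else 0 := by
      intro c ck
      by_cases h0 : c k₀ = D0 d η k₀
      · rw [if_pos h0]
        congr 1
        -- weight bookkeeping
        have hWn : W d pa η ν n c = ∏ k ∈ Finset.univ.erase k₀,
            (if (k : ℕ) < n then wK d pa η ν k c (c k)
              else if c k = D0 d η k then 1 else 0) := by
          rw [W, ← Finset.mul_prod_erase Finset.univ _ (Finset.mem_univ k₀),
            if_neg (by omega : ¬ ((k₀ : ℕ) < n)), if_pos h0, one_mul]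
        have hWn1 : W d pa η ν (n + 1) (Function.update c k₀ ck)
            = wK d pa η ν k₀ (Function.update c k₀ ck) ck * ∏ k ∈ Finset.univ.erase k₀,
              (if (k : ℕ) < n + 1 then wK d pa η ν k (Function.update c k₀ ck)
                  ((Function.update c k₀ ck) k)
                else if (Function.update c k₀ ck) k = D0 d η k then 1 else 0) := by
          rw [W, ← Finset.mul_prod_erase Finset.univ _ (Finset.mem_univ k₀),
            if_pos (by omega : (k₀ : ℕ) < n + 1), Function.update_self]
        have hwKeq : wK d pa η ν k₀ (Function.update c k₀ ck) ck = wK d pa η ν k₀ c ck := by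
          refine wK_parents ck fun j hj => ?_
          have : j < k₀ := hsort k₀ j hj
          rw [Function.update_of_ne (ne_of_lt this)]
        have hprod : ∀ k ∈ Finset.univ.erase k₀,
            (if (k : ℕ) < n + 1 then wK d pa η ν k (Function.update c k₀ ck)
                ((Function.update c k₀ ck) k)
              else if (Function.update c k₀ ck) k = D0 d η k then 1 else 0)
            = (if (k : ℕ) < n then wK d pa η ν k c (c k)
              else if c k = D0 d η k then 1 else 0) := by
          intro k hk
          have hkne : k ≠ k₀ := (Finset.mem_erase.mp hk).1
          have hkn : (k : ℕ) ≠ n := fun h => hkne (Fin.ext h)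
          rw [Function.update_of_ne hkne]
          by_cases hlt : (k : ℕ) < n
          · rw [if_pos hlt, if_pos (by omega)]
            refine wK_parents (c k) fun j hj => ?_
            have hj' : j < k := hsort k j hj
            have : j ≠ k₀ := by
              intro hjk
              rw [hjk] at hj'
              have : (k₀ : ℕ) < (k : ℕ) := hj'
              omega
            rw [Function.update_of_ne this]
          · rw [if_neg hlt, if_neg (by omega)]
        rw [hWn1, hWn, hwKeq, Finset.prod_congr rfl hprod, mul_comm]
      · rw [if_neg h0]
        have hW0 : W d pa η ν n c = 0 :=
          Finset.prod_eq_zero (Finset.mem_univ k₀)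
            (by rw [if_neg (by omega : ¬ ((k₀ : ℕ) < n)), if_neg h0])
        rw [hW0, zero_mul, zero_smul]
    rw [hstep, hsum, bind_finsum_smul _ _ _ (measurable_Fker hν k₀),
      Finset.sum_congr rfl (fun c _ => hbindc c)]
    -- reindex the double sum
    rw [← Fintype.sum_prod_type (f := fun p : CellAll d η × CellK d η k₀ =>
      (W d pa η ν n p.1 * wK d pa η ν k₀ p.1 p.2) •
        PiM d η ν (n + 1) (Function.update p.1 k₀ p.2))]
    rw [Fintype.sum_equiv (swapUpd d η k₀)
      (fun p : CellAll d η × CellK d η k₀ =>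
        (W d pa η ν n p.1 * wK d pa η ν k₀ p.1 p.2) •
          PiM d η ν (n + 1) (Function.update p.1 k₀ p.2))
      (fun q : CellAll d η × CellK d η k₀ =>
        if q.2 = D0 d η k₀ then W d pa η ν (n + 1) q.1 • PiM d η ν (n + 1) q.1 else 0)
      (fun p => key p.1 p.2)]
    rw [Fintype.sum_prod_type]
    refine Finset.sum_congr rfl fun c' _ => ?_
    rw [Finset.sum_ite_eq' Finset.univ (D0 d η k₀)
      (fun _ => W d pa η ν (n + 1) c' • PiM d η ν (n + 1) c'), if_pos (Finset.mem_univ _)]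

end S16
end
noncomputable section
namespace S16
open MeasureTheory Finset
open scoped ENNReal Classical

variable {K : ℕ} {d : Fin K → ℕ} {η : ℕ} {pa : Fin K → Finset (Fin K)} {ν : Measure (Pt d)}

lemma jointCyl_empty (c : CellAll d η) : jointCyl d η (∅ : Finset (Fin K)) c = Set.univ := by
  ext x; simp [jointCyl]

lemma measurableSet_evalCell (k : Fin K) (ck : CellK d η k) :
    MeasurableSet ((fun x : Pt d => x k) ⁻¹' cellCo d η ck) :=
  (measurable_pi_apply k) (measurableSet_cellCo d η ck)

/-- If the weight is nonzero and the parent cylinder has positive measure, then the joint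
cylinder over parents and the node has positive measure. -/
lemma wK_pos_inter {c : CellAll d η} {k : Fin K} {ck : CellK d η k}
    (hpar : ν (jointCyl d η (pa k) c) ≠ 0) (hw : wK d pa η ν k c ck ≠ 0) :
    ν (((fun x : Pt d => x k) ⁻¹' cellCo d η ck) ∩ jointCyl d η (pa k) c) ≠ 0 := by
  rw [wK, condOn, if_neg hpar, Measure.smul_apply, smul_eq_mul,
    Measure.restrict_apply (measurableSet_evalCell k ck)] at hw
  intro h0
  rw [h0, mul_zero] at hw
  exact hw rfl

theorem cyl_pos (hsort : SortedGraph pa) (hnc : NoColliders pa) (hν : IsProbabilityMeasure ν)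
    {c : CellAll d η} (hw : ∀ k : Fin K, wK d pa η ν k c (c k) ≠ 0) :
    ∀ (n : ℕ) (S : Finset (Fin K)), FullConn pa S → (∀ j ∈ S, (j : ℕ) < n) →
      ν (jointCyl d η S c) ≠ 0 := by
  intro n
  induction n with
  | zero =>
    intro S _ hbound
    have hS : S = ∅ := Finset.eq_empty_of_forall_notMem fun j hj => by
      have := hbound j hj; omega
    rw [hS, jointCyl_empty, measure_univ]
    exact one_ne_zero
  | succ n IH =>
    intro S hfc hbound
    rcases S.eq_empty_or_nonempty with rfl | hS
    · rw [jointCyl_empty, measure_univ]; exact one_ne_zero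
    · set j₀ : Fin K := S.max' hS with hj₀
      have hj₀S : j₀ ∈ S := S.max'_mem hS
      have hpar : ν (jointCyl d η (pa j₀) c) ≠ 0 := by
        refine IH (pa j₀) (hnc j₀) fun j hj => ?_
        have h1 : j < j₀ := hsort j₀ j hj
        have h2 : (j₀ : ℕ) < n + 1 := hbound _ hj₀S
        have h3 : (j : ℕ) < (j₀ : ℕ) := h1
        omega
      have hint := wK_pos_inter hpar (hw j₀)
      intro h0
      apply hint
      refine measure_mono_null (fun x hx => ?_) h0
      obtain ⟨hx1, hx2⟩ := hx
      intro j hj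
      by_cases hjj : j = j₀
      · subst hjj
        exact hx1
      · have hjlt : j < j₀ := lt_of_le_of_ne (S.le_max' j hj) hjj
        exact hx2 j (hfc j hj j₀ hj₀S hjlt)

lemma margK_cell_pos (hsort : SortedGraph pa) (hnc : NoColliders pa)
    (hν : IsProbabilityMeasure ν) {c : CellAll d η}
    (hw : ∀ k : Fin K, wK d pa η ν k c (c k) ≠ 0) (k : Fin K) :
    margK d ν k (cellCo d η (c k)) ≠ 0 := by
  have hpar : ν (jointCyl d η (pa k) c) ≠ 0 :=
    cyl_pos hsort hnc hν hw K (pa k) (hnc k) (fun j _ => j.isLt)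
  have hint := wK_pos_inter hpar (hw k)
  rw [margK, Measure.map_apply (measurable_pi_apply k) (measurableSet_cellCo d η (c k))]
  exact fun h0 => hint (measure_mono_null Set.inter_subset_left h0)

end S16
end
noncomputable section
namespace S16
open MeasureTheory Finset
open scoped ENNReal Classical

variable {K : ℕ} {d : Fin K → ℕ} {η : ℕ} {pa : Fin K → Finset (Fin K)} {ν : Measure (Pt d)}

lemma cylOf_univ_eq (x : Pt d) :
    cylOf d η Finset.univ x = cellSet d η (idxAll d η x) := by
  ext y
  simp only [cylOf, Set.mem_setOf_eq, cellSet]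
  constructor
  · intro h
    funext k
    funext i
    exact Fin.ext (h k (Finset.mem_univ k) i)
  · intro h k _ i
    exact congrArg Fin.val (congrFun (congrFun h k) i)

lemma measurable_cMid : Measurable (cMid η) := by
  have : cMid η = fun t => midOf η (cIdx η t) := funext (cMid_eq_midOf η)
  rw [this]
  exact (Measurable.of_discrete (f := midOf η)).comp (measurable_cIdx η)

lemma measurable_midPt : Measurable (midPt d η) :=
  measurable_pi_lambda _ fun k => measurable_pi_lambda _ fun i =>
    measurable_cMid.comp ((measurable_pi_apply i).comp (measurable_pi_apply k))

lemma midPt_cell {c : CellAll d η} {x : Pt d} (hx : x ∈ cellSet d η c) :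
    midPt d η x = repPt d η c := by
  have hidx : idxAll d η x = c := hx
  funext k i
  have h2 : cIdx η (x k i) = ((c k i : ℕ)) :=
    congrArg Fin.val (congrFun (congrFun hidx k) i)
  show cMid η (x k i) = midOf η ((c k i : ℕ))
  rw [cMid_eq_midOf, h2]

lemma map_midPt_PiMK (hν : IsProbabilityMeasure ν) (c : CellAll d η) :
    (PiM d η ν K c).map (midPt d η) = Measure.dirac (repPt d η c) := by
  haveI : IsProbabilityMeasure (PiM d η ν K c) := by
    haveI := fun k => PiFam_prob hν K c k
    rw [PiM]; infer_instance
  refine map_const_on_full _ (measurableSet_cellSet d η c) ?_ measurable_midPt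
    (fun a ha => midPt_cell ha)
  exact PiM_cellSet_one hν (fun k hk => absurd k.isLt (not_lt.mpr hk))

lemma W_le_one (hν : IsProbabilityMeasure ν) (n : ℕ) (c : CellAll d η) :
    W d pa η ν n c ≤ 1 := by
  rw [W]
  refine Finset.prod_le_one (fun k _ => by simp) (fun k _ => ?_)
  split_ifs
  · exact wK_le_one hν k c (c k)
  · exact le_rfl
  · exact zero_le_one

lemma integrable_of_lip {f : Pt d → ℝ} (hf : LipschitzWith 1 f) (μ : Measure (Pt d))
    [IsFiniteMeasure μ] : Integrable f μ := by
  have hcont : Continuous f := hf.continuous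
  obtain ⟨C, hC⟩ : ∃ C : ℝ, ∀ x : Pt d, ‖f x‖ ≤ C := by
    obtain ⟨C, hC⟩ := isCompact_univ.exists_bound_of_continuousOn
      (hcont.continuousOn : ContinuousOn f (Set.univ : Set (Pt d)))
    exact ⟨C, fun x => hC x (Set.mem_univ x)⟩
  have hmeas : Measurable f := hcont.measurable
  exact Integrable.mono' (integrable_const C) hmeas.aestronglyMeasurable
    (Filter.Eventually.of_forall hC)

lemma integrable_dirac'' {g : Pt d → ℝ} (hg : StronglyMeasurable g) (x : Pt d) :
    Integrable g (Measure.dirac x) := by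
  refine ⟨hg.aestronglyMeasurable, ?_⟩
  rw [HasFiniteIntegral]
  rw [lintegral_dirac' x hg.measurable.enorm]
  exact enorm_lt_top

lemma stronglyMeasurable_fAvg (f : Pt d → ℝ) :
    StronglyMeasurable (fAvg d η ν f) := by
  have heq : fAvg d η ν f = fun x =>
      (fun c : CellAll d η => if prodMarg d ν (cellSet d η c) = 0 then 0
        else (∫ y in cellSet d η c, f y ∂prodMarg d ν) /
          (prodMarg d ν (cellSet d η c)).toReal) (idxAll d η x) := by
    funext x
    rw [fAvg, cylOf_univ_eq]
  rw [heq]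
  exact Measurable.stronglyMeasurable (measurable_of_cell_fibers
    (fun c : CellAll d η => if prodMarg d ν (cellSet d η c) = 0 then 0
      else (∫ y in cellSet d η c, f y ∂prodMarg d ν) /
        (prodMarg d ν (cellSet d η c)).toReal))

lemma integral_PiMK_good (hν : IsProbabilityMeasure ν) {c : CellAll d η}
    (hpos : ∀ k, margK d ν k (cellCo d η (c k)) ≠ 0) (f : Pt d → ℝ) :
    ∫ x, f x ∂(PiM d η ν K c) = fAvg d η ν f (repPt d η c) := by
  haveI := fun k => margK_prob (d := d) hν k
  set A : Fin K → ℝ≥0∞ := fun k => (margK d ν k (cellCo d η (c k)))⁻¹ with hA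
  have hAne : ∀ k, A k ≠ ∞ := fun k => ENNReal.inv_ne_top.mpr (hpos k)
  have hfam : PiFam d η ν K c =
      fun k => A k • (margK d ν k).restrict (cellCo d η (c k)) := by
    funext k
    rw [PiFam, if_pos k.isLt, mNode, condOn, if_neg (hpos k)]
  have hpiEq : Measure.pi (fun k => margK d ν k) = prodMarg d ν := rfl
  have hmeas : PiM d η ν K c =
      (∏ k, A k) • (prodMarg d ν).restrict (cellSet d η c) := by
    rw [PiM, hfam, pi_smul A hAne _,
      pi_restrict _ _ (fun k => measurableSet_cellCo d η (c k)), ← cellSet_eq_pi, hpiEq]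
  have hcyl : cylOf d η Finset.univ (repPt d η c) = cellSet d η c := by
    rw [cylOf_univ_eq, idxAll_repPt]
  have hrho : prodMarg d ν (cellSet d η c) = ∏ k, margK d ν k (cellCo d η (c k)) := by
    rw [← hpiEq, cellSet_eq_pi, Measure.pi_pi]
  have hrho0 : prodMarg d ν (cellSet d η c) ≠ 0 := by
    rw [hrho]
    exact Finset.prod_ne_zero_iff.mpr (fun k _ => hpos k)
  rw [hmeas, integral_smul_measure, fAvg, hcyl, if_neg hrho0]
  have htoReal : (∏ k, A k).toReal = ((prodMarg d ν (cellSet d η c)).toReal)⁻¹ := by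
    rw [ENNReal.toReal_prod, hrho, ENNReal.toReal_prod, ← Finset.prod_inv_distrib]
    refine Finset.prod_congr rfl fun k _ => ?_
    rw [hA, ENNReal.toReal_inv]
  rw [htoReal, smul_eq_mul, div_eq_inv_mul]

theorem main_eq (hsort : SortedGraph pa) (hnc : NoColliders pa)
    (hν : IsProbabilityMeasure ν) (f : Pt d → ℝ) (hf : LipschitzWith 1 f) :
    ∫ x, f x ∂(opBA d pa η ν) = ∫ x, fAvg d η ν f x ∂(opM d pa η ν) := by
  have hBA : opBA d pa η ν = ∑ c : CellAll d η, W d pa η ν K c • PiM d η ν K c :=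
    chainM_eq hsort hν K le_rfl
  have hM : opM d pa η ν = ∑ c : CellAll d η,
      W d pa η ν K c • Measure.dirac (repPt d η c) := by
    rw [opM, hBA, map_finsum_smul _ _ measurable_midPt]
    exact Finset.sum_congr rfl fun c _ => by rw [map_midPt_PiMK hν c]
  have hPiMprob : ∀ c : CellAll d η, IsProbabilityMeasure (PiM d η ν K c) := fun c => by
    haveI := fun k => PiFam_prob hν K c k
    rw [PiM]; infer_instance
  have hWtop : ∀ c : CellAll d η, W d pa η ν K c ≠ ∞ := fun c =>
    ne_top_of_le_ne_top ENNReal.one_ne_top (W_le_one hν K c)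
  rw [hBA, hM]
  rw [integral_finset_sum_measure (fun c _ => by
    haveI := hPiMprob c
    exact (integrable_of_lip hf _).smul_measure (hWtop c))]
  rw [integral_finset_sum_measure (fun c _ =>
    (integrable_dirac'' (stronglyMeasurable_fAvg f) _).smul_measure (hWtop c))]
  refine Finset.sum_congr rfl fun c _ => ?_
  rw [integral_smul_measure, integral_smul_measure,
    integral_dirac' _ _ (stronglyMeasurable_fAvg f)]
  by_cases hW : W d pa η ν K c = 0
  · rw [hW]; simp
  · have hwk : ∀ k : Fin K, wK d pa η ν k c (c k) ≠ 0 := by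
      intro k
      have hprod := Finset.prod_ne_zero_iff.mp (by rwa [W] at hW) k (Finset.mem_univ k)
      rwa [if_pos k.isLt] at hprod
    rw [integral_PiMK_good hν (fun k => margK_cell_pos hsort hnc hν hwk k)]

end S16
end
/-- Lemma: integrals against `ν^{bA}` as integrals of cell averages
against `ν^M`. If `G` has no colliders, then for every `ν ∈ P(X)` and every 1-Lipschitz
`f : X → ℝ`, `∫ f dν^{bA} = ∫ f^ν dν^M`, where `f^ν` is the cell average of `f` w.r.t. the
product of the marginals of `ν` (set to `0` on null cells). -/
theorem stmt16 {K : ℕ} (d : Fin K → ℕ) (pa : Fin K → Finset (Fin K))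
    (hsort : SortedGraph pa) (hnc : NoColliders pa) (η : ℕ)
    (ν : Measure (Pt d)) (hν : IsProbabilityMeasure ν) :
    ∀ f : Pt d → ℝ, LipschitzWith 1 f →
      ∫ x, f x ∂(opBA d pa η ν) = ∫ x, fAvg d η ν f x ∂(opM d pa η ν) := fun f hf =>
  S16.main_eq hsort hnc hν f hf
end
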